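/- arXiv:2509.01039 — 7 statements merged into one kernel-verified Lean document; each statement's English description precedes it below -/
import Mathlib

section
/- For every integer T ≥ 1, the spectral radius of A_T satisfies the strict, horizon-independent bound ρ(A_T) < K̄ + K₁L̄/(ρ(1 − β)). -/
noncomputable section

/-- The spectral radius of a real square matrix: the maximum modulus of its
complex eigenvalues. -/
def specRad {n : ℕ} (A : Matrix (Fin n) (Fin n) ℝ) : ℝ :=
  sSup {x : ℝ | ∃ μ : ℂ, μ ∈ spectrum ℂ (A.map Complex.ofReal) ∧ x = ‖μ‖}

/-- `L̄ = L₁ / (1 - β K₁ / 2)`. -/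
def Lbar (L1 K1 β : ℝ) : ℝ := L1 / (1 - β * K1 / 2)

/-- `K̄ = 3K₁/2 + K₁ L̄ / (2 ρ (1 - β))`. -/
def Kbar (L1 K1 rho β : ℝ) : ℝ := 3 * K1 / 2 + K1 * Lbar L1 K1 β / (2 * rho * (1 - β))

/-- `K̂ = K̄ + K₁ L̄ / ρ`. -/
def Khat (L1 K1 rho β : ℝ) : ℝ := Kbar L1 K1 rho β + K1 * Lbar L1 K1 β / rho

/-- `r = K̄ β + (K₁/ρ) L₁ β`. -/
def rconst (L1 K1 rho β : ℝ) : ℝ := Kbar L1 K1 rho β * β + (K1 / rho) * L1 * β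

/-- The `T × T` matrix `A_T` (1-based indices `1 ≤ i, j ≤ T` correspond to `0`-based
`Fin T` values `i-1, j-1`): entry `K̄ + L̄K₁/ρ` if `j = i - 1`, entry `(L̄K₁/ρ) β^(j-i+1)`
if `i - 1 < j ≤ T - 1`, entry `(L₁K₁/ρ) β^(T-i+1)` if `j = T`, and `0` if `j < i - 1`. -/
def AT (L1 K1 rho β : ℝ) (T : ℕ) : Matrix (Fin T) (Fin T) ℝ :=
  fun i j =>
    if (j : ℕ) + 1 = T then (L1 * K1 / rho) * β ^ (T - (i : ℕ))
    else if (j : ℕ) + 1 = (i : ℕ) then Kbar L1 K1 rho β + Lbar L1 K1 β * K1 / rho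
    else if (i : ℕ) ≤ (j : ℕ) then (Lbar L1 K1 β * K1 / rho) * β ^ ((j : ℕ) - (i : ℕ) + 1)
    else 0

end

section StmtTwoProof

attribute [local instance] Matrix.linftyOpNormedRing Matrix.linftyOpNormedAlgebra
  Matrix.linfty_opNormOneClass

/-- Auxiliary: a sum of an indicator of a single natural value is at most that value. -/
lemma sum_ite_succ_le {T a : ℕ} {X : ℝ} (hX : 0 ≤ X) :
    ∑ n ∈ Finset.range T, (if n + 1 = a then X else 0) ≤ X := by
  cases a with
  | zero => simpa using hX
  | succ a' =>
    have h : ∀ n ∈ Finset.range T, (if n + 1 = a' + 1 then X else 0)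
        = (if n = a' then X else 0) := by
      intro n _; simp
    rw [Finset.sum_congr rfl h, Finset.sum_ite_eq' (Finset.range T) a' (fun _ => X)]
    split_ifs <;> simp [hX]

/-- Strict, horizon-independent bound: `ρ(A_T) < K̄ + K₁ L̄ / (ρ (1 - β))`. -/
theorem stmt2 (L1 K1 rho β : ℝ)
    (hL1 : 0 < L1) (hK1 : 0 < K1) (hrho : 0 < rho)
    (hβ0 : 0 < β) (hβ1 : β < 1) (hβK : β * K1 < 2)
    (T : ℕ) (hT : 1 ≤ T) :
    specRad (AT L1 K1 rho β T)
      < Kbar L1 K1 rho β + K1 * Lbar L1 K1 β / (rho * (1 - β)) := by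
  haveI : Nonempty (Fin T) := ⟨⟨0, hT⟩⟩
  haveI : CompleteSpace (Matrix (Fin T) (Fin T) ℂ) :=
    by infer_instance
  set M : Matrix (Fin T) (Fin T) ℂ := (AT L1 K1 rho β T).map Complex.ofReal with hM
  -- basic positivity facts
  have hb : 0 < 1 - β := by linarith
  have hden : 0 < 1 - β * K1 / 2 := by linarith
  have hLb : 0 < Lbar L1 K1 β := div_pos hL1 hden
  have hKb : 0 < Kbar L1 K1 rho β := by
    have h2 : 0 < 2 * rho * (1 - β) := by positivity
    have := div_pos (mul_pos hK1 hLb) h2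
    unfold Kbar; linarith
  set c : ℝ := Lbar L1 K1 β * K1 / rho with hc_def
  have hc : 0 < c := by positivity
  have hL1Lb : L1 ≤ Lbar L1 K1 β := by
    rw [Lbar, le_div_iff₀ hden]
    nlinarith [mul_pos hβ0 hK1]
  set C : ℝ := Kbar L1 K1 rho β + K1 * Lbar L1 K1 β / (rho * (1 - β)) with hC_def
  have hCeq : C = Kbar L1 K1 rho β + c + c * β / (1 - β) := by
    rw [hC_def, hc_def]
    field_simp
    ring
  have hC : 0 < C := by
    have h1 : 0 < c * β / (1 - β) := by positivity
    rw [hCeq]; linarith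
  -- row sums are strictly below C
  have hrow : ∀ i : Fin T, (∑ j : Fin T, ‖M i j‖) < C := by
    intro i
    set a : ℕ := (i : ℕ) with ha_def
    have haT : a < T := i.isLt
    set g : ℕ → ℝ := fun n =>
      (if n + 1 = a then Kbar L1 K1 rho β + Lbar L1 K1 β * K1 / rho else 0) +
      (if a ≤ n then c * β ^ (n - a + 1) else 0) with hg
    -- termwise bound
    have hterm : ∀ j : Fin T, ‖M i j‖ ≤ g (j : ℕ) := by
      intro j
      have hMij : ‖M i j‖ = |AT L1 K1 rho β T i j| := by
        simp [hM, Matrix.map_apply]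
      rw [hMij, AT]
      simp only [hg, ← ha_def]
      by_cases h1 : (j : ℕ) + 1 = T
      · rw [if_pos h1]
        have haj : a ≤ (j : ℕ) := by omega
        rw [if_neg (show ¬(j : ℕ) + 1 = a by omega), if_pos haj, zero_add]
        have he : (j : ℕ) - a + 1 = T - a := by omega
        rw [he, abs_of_nonneg (by positivity), hc_def]
        have hp : (0:ℝ) ≤ β ^ (T - a) := by positivity
        have hdd : L1 * K1 / rho ≤ Lbar L1 K1 β * K1 / rho := by gcongr
        exact mul_le_mul_of_nonneg_right hdd hp
      · rw [if_neg h1]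
        have hc' : 0 < Lbar L1 K1 β * K1 / rho := by positivity
        by_cases h2 : (j : ℕ) + 1 = a
        · rw [if_pos h2, if_neg (show ¬a ≤ (j : ℕ) by omega), add_zero,
            abs_of_nonneg (by linarith), if_pos h2]
        · rw [if_neg h2, if_neg h2, zero_add]
          by_cases h3 : a ≤ (j : ℕ)
          · rw [if_pos h3, abs_of_nonneg (by positivity)]
          · rw [if_neg h3, abs_zero]
    -- sum of the bound
    have hsum1 : (∑ j : Fin T, ‖M i j‖) ≤ ∑ n ∈ Finset.range T, g n := by
      calc (∑ j : Fin T, ‖M i j‖) ≤ ∑ j : Fin T, g (j : ℕ) :=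
            Finset.sum_le_sum fun j _ => hterm j
        _ = ∑ n ∈ Finset.range T, g n := Fin.sum_univ_eq_sum_range g T
    have hsplit : ∑ n ∈ Finset.range T, g n =
        (∑ n ∈ Finset.range T,
          (if n + 1 = a then Kbar L1 K1 rho β + Lbar L1 K1 β * K1 / rho else 0)) +
        (∑ n ∈ Finset.range T, (if a ≤ n then c * β ^ (n - a + 1) else 0)) := by
      rw [hg, Finset.sum_add_distrib]
    have hS1 : (∑ n ∈ Finset.range T,
        (if n + 1 = a then Kbar L1 K1 rho β + Lbar L1 K1 β * K1 / rho else 0))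
        ≤ Kbar L1 K1 rho β + c := by
      rw [hc_def]
      exact sum_ite_succ_le (by rw [← hc_def]; linarith)
    have hS2 : (∑ n ∈ Finset.range T, (if a ≤ n then c * β ^ (n - a + 1) else 0))
        < c * β / (1 - β) := by
      have heq : (∑ n ∈ Finset.range T, (if a ≤ n then c * β ^ (n - a + 1) else 0))
          = c * β * ((β ^ (T - a) - 1) / (β - 1)) := by
        rw [Finset.range_eq_Ico, ← Finset.sum_Ico_consecutive _ (Nat.zero_le a) haT.le]
        have hz : (∑ n ∈ Finset.Ico 0 a, (if a ≤ n then c * β ^ (n - a + 1) else 0)) = 0 := by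
          apply Finset.sum_eq_zero
          intro n hn
          rw [Finset.mem_Ico] at hn
          rw [if_neg (by omega)]
        rw [hz, zero_add]
        have hcongr : (∑ n ∈ Finset.Ico a T, (if a ≤ n then c * β ^ (n - a + 1) else 0))
            = ∑ n ∈ Finset.Ico a T, c * β ^ (n - a + 1) := by
          apply Finset.sum_congr rfl
          intro n hn
          rw [Finset.mem_Ico] at hn
          rw [if_pos hn.1]
        rw [hcongr, Finset.sum_Ico_eq_sum_range]
        have hcongr2 : (∑ k ∈ Finset.range (T - a), c * β ^ (a + k - a + 1))
            = ∑ k ∈ Finset.range (T - a), (c * β) * β ^ k := by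
          apply Finset.sum_congr rfl
          intro k _
          have : a + k - a + 1 = k + 1 := by omega
          rw [this, pow_succ]; ring
        rw [hcongr2, ← Finset.mul_sum, geom_sum_eq (ne_of_lt hβ1)]
      rw [heq]
      have hfrac : (β ^ (T - a) - 1) / (β - 1) = (1 - β ^ (T - a)) / (1 - β) := by
        rw [div_eq_div_iff (by linarith) (by linarith)]; ring
      rw [hfrac, ← mul_div_assoc, div_lt_div_iff₀ hb hb]
      have hm : 0 < β ^ (T - a) := by positivity
      nlinarith [mul_pos (mul_pos hc hβ0) hm, mul_pos (mul_pos (mul_pos hc hβ0) hm) hb]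
    calc (∑ j : Fin T, ‖M i j‖) ≤ _ := hsum1
      _ < (Kbar L1 K1 rho β + c) + c * β / (1 - β) := by
          rw [hsplit]; exact add_lt_add_of_le_of_lt hS1 hS2
      _ = C := by rw [hCeq]
  -- from row sums to the operator norm
  have hnorm : ‖M‖ < C := by
    rw [Matrix.linfty_opNorm_def, ← Real.coe_toNNReal C hC.le, NNReal.coe_lt_coe]
    refine (Finset.sup_lt_iff ?_).mpr ?_
    · simpa using Real.toNNReal_pos.mpr hC
    · intro i _
      rw [← NNReal.coe_lt_coe, Real.coe_toNNReal C hC.le, NNReal.coe_sum]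
      simpa [coe_nnnorm] using hrow i
  -- conclude
  have hle : specRad (AT L1 K1 rho β T) ≤ ‖M‖ := by
    apply Real.sSup_le _ (norm_nonneg M)
    rintro x ⟨μ, hμ, rfl⟩
    exact spectrum.norm_le_norm_of_mem hμ
  exact hle.trans_lt hnorm

end StmtTwoProof
end

section
/- The sequence of spectral radii of the matrices A_T is nondecreasing in the horizon: for every integer T ≥ 1 one has ρ(A_T) ≤ ρ(A_{T+1}). -/
section aux

open Matrix Filter Topology ENNReal

attribute [local instance] Matrix.linftyOpNormedRing Matrix.linftyOpNormedAlgebra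

private lemma map_pow_ofReal {n : ℕ} (A : Matrix (Fin n) (Fin n) ℝ) (m : ℕ) :
    (A.map Complex.ofReal) ^ m = (A ^ m).map Complex.ofReal := by
  have := map_pow (Complex.ofRealHom.mapMatrix (m := Fin n)) A m
  simp only [RingHom.mapMatrix_apply] at this; exact this.symm

private lemma nnnorm_ofReal' (x : ℝ) : ‖(x:ℂ)‖₊ = ‖x‖₊ :=
  NNReal.coe_injective (by simp [coe_nnnorm, Complex.norm_real])

/-- Entrywise domination by a principal submatrix implies spectral-radius comparison. -/
theorem specRad_mono {n : ℕ} (B : Matrix (Fin n) (Fin n) ℝ)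
    (A : Matrix (Fin (n + 1)) (Fin (n + 1)) ℝ)
    (hA : ∀ i j, 0 ≤ A i j) (hB0 : ∀ i j, 0 ≤ B i j)
    (hBA : ∀ i j, B i j ≤ A i.castSucc j.castSucc) :
    specRad B ≤ specRad A := by
  have hcs : CompleteSpace (Matrix (Fin n) (Fin n) ℂ) := FiniteDimensional.complete ℂ _
  have hcs' : CompleteSpace (Matrix (Fin (n + 1)) (Fin (n + 1)) ℂ) :=
    FiniteDimensional.complete ℂ _
  -- powers of A are entrywise nonnegative
  have hApow : ∀ m i j, 0 ≤ (A ^ m) i j := by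
    intro m
    induction m with
    | zero => intro i j; simp [Matrix.one_apply]; positivity
    | succ m ih =>
      intro i j
      rw [pow_succ, Matrix.mul_apply]
      exact Finset.sum_nonneg fun k _ => mul_nonneg (ih i k) (hA k j)
  -- powers of B are entrywise nonneg and dominated by corresp. entries of powers of A
  have hBpow : ∀ m i j, 0 ≤ (B ^ m) i j ∧
      (B ^ m) i j ≤ (A ^ m) i.castSucc j.castSucc := by
    intro m
    induction m with
    | zero =>
      intro i j
      constructor
      · simp [Matrix.one_apply]; positivity
      · simp only [pow_zero, Matrix.one_apply]
        by_cases h : i = j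
        · simp [h]
        · have h' : i.castSucc ≠ j.castSucc := fun hc => h (Fin.castSucc_injective _ hc)
          simp [h, h']
    | succ m ih =>
      intro i j
      rw [pow_succ, pow_succ, Matrix.mul_apply, Matrix.mul_apply]
      constructor
      · exact Finset.sum_nonneg fun k _ => mul_nonneg (ih i k).1 (hB0 k j)
      · calc ∑ k, (B ^ m) i k * B k j
            ≤ ∑ k : Fin n, (A ^ m) i.castSucc k.castSucc * A k.castSucc j.castSucc := by
              refine Finset.sum_le_sum fun k _ => ?_
              exact mul_le_mul (ih i k).2 (hBA k j) (hB0 k j) (hApow m _ _)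
          _ ≤ ∑ k : Fin (n+1), (A ^ m) i.castSucc k * A k j.castSucc := by
              rw [Fin.sum_univ_castSucc]
              exact le_add_of_nonneg_right (mul_nonneg (hApow m _ _) (hA _ _))
  -- norm comparison
  have hnorm : ∀ m : ℕ, ‖(B.map Complex.ofReal) ^ m‖₊ ≤ ‖(A.map Complex.ofReal) ^ m‖₊ := by
    intro m
    rw [map_pow_ofReal, map_pow_ofReal, Matrix.linfty_opNNNorm_def, Matrix.linfty_opNNNorm_def]
    apply Finset.sup_le
    intro i _
    refine le_trans ?_ (Finset.le_sup (Finset.mem_univ i.castSucc))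
    rw [← NNReal.coe_le_coe]
    push_cast [Matrix.map_apply, nnnorm_ofReal', coe_nnnorm, Real.norm_eq_abs]
    calc ∑ j, |(B ^ m) i j| = ∑ j, (B ^ m) i j := by
          exact Finset.sum_congr rfl fun j _ => abs_of_nonneg (hBpow m i j).1
      _ ≤ ∑ j, (A ^ m) i.castSucc j.castSucc :=
          Finset.sum_le_sum fun j _ => (hBpow m i j).2
      _ ≤ ∑ j, (A ^ m) i.castSucc j := by
          rw [Fin.sum_univ_castSucc]
          exact le_add_of_nonneg_right (hApow m _ _)
      _ = ∑ j, |(A ^ m) i.castSucc j| :=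
          Finset.sum_congr rfl fun j _ => (abs_of_nonneg (hApow m _ _)).symm
  -- spectral radius comparison via Gelfand's formula
  have hsr : spectralRadius ℂ (B.map Complex.ofReal) ≤ spectralRadius ℂ (A.map Complex.ofReal) := by
    refine le_of_tendsto_of_tendsto'
      (spectrum.pow_nnnorm_pow_one_div_tendsto_nhds_spectralRadius (B.map Complex.ofReal))
      (spectrum.pow_nnnorm_pow_one_div_tendsto_nhds_spectralRadius (A.map Complex.ofReal))
      fun m => ?_
    exact ENNReal.rpow_le_rpow (by exact_mod_cast hnorm m) (by positivity)
  -- bddAbove of the set for A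
  set SA := {x : ℝ | ∃ μ : ℂ, μ ∈ spectrum ℂ (A.map Complex.ofReal) ∧ x = ‖μ‖} with hSA
  have hSAimg : SA = (fun μ : ℂ => ‖μ‖) '' spectrum ℂ (A.map Complex.ofReal) := by
    ext x
    simp [hSA, Set.mem_image, eq_comm, and_comm]
  have hbdd : BddAbove SA := by
    rw [hSAimg]
    exact ((spectrum.isCompact _).image continuous_norm).bddAbove
  -- 0 ≤ specRad A
  obtain ⟨μ₀, hμ₀⟩ := spectrum.nonempty (A.map Complex.ofReal)
  have hA0 : 0 ≤ specRad A := by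
    have h1 : ‖μ₀‖ ≤ sSup SA := le_csSup hbdd ⟨μ₀, hμ₀, rfl⟩
    exact le_trans (norm_nonneg μ₀) h1
  -- spectralRadius A ≤ ofReal (specRad A)
  have hup : spectralRadius ℂ (A.map Complex.ofReal) ≤ ENNReal.ofReal (specRad A) := by
    rw [spectralRadius]
    refine iSup₂_le fun μ hμ => ?_
    rw [← enorm_eq_nnnorm, ← ofReal_norm]
    refine ENNReal.ofReal_le_ofReal (le_csSup hbdd ⟨μ, hμ, ?_⟩)
    rfl
  -- conclude
  refine Real.sSup_le ?_ hA0
  rintro x ⟨μ, hμ, rfl⟩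
  have h1 : (‖μ‖₊ : ℝ≥0∞) ≤ spectralRadius ℂ (B.map Complex.ofReal) := by
    rw [spectralRadius]
    exact le_iSup₂ (f := fun k (_ : k ∈ spectrum ℂ (B.map Complex.ofReal)) => (‖k‖₊ : ℝ≥0∞)) μ hμ
  have h2 : (‖μ‖₊ : ℝ≥0∞) ≤ ENNReal.ofReal (specRad A) := h1.trans (hsr.trans hup)
  rw [← enorm_eq_nnnorm, ← ofReal_norm, ENNReal.ofReal_le_ofReal_iff hA0] at h2
  exact h2

/-- All entries of `A_T` are nonnegative. -/
private lemma AT_nonneg {L1 K1 rho β : ℝ}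
    (hL1 : 0 < L1) (hK1 : 0 < K1) (hrho : 0 < rho)
    (hβ0 : 0 < β) (hβ1 : β < 1) (hβK : β * K1 < 2)
    (T : ℕ) (i j : Fin T) : 0 ≤ AT L1 K1 rho β T i j := by
  have hden : 0 < 1 - β * K1 / 2 := by linarith
  have hLbar : 0 < Lbar L1 K1 β := div_pos hL1 hden
  have hKbar : 0 < Kbar L1 K1 rho β := by
    have h1 : 0 < 1 - β := by linarith
    have h2 : 0 < K1 * Lbar L1 K1 β / (2 * rho * (1 - β)) := by positivity
    unfold Kbar; positivity
  unfold AT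
  split_ifs <;> positivity

private lemma AT_le {L1 K1 rho β : ℝ}
    (hL1 : 0 < L1) (hK1 : 0 < K1) (hrho : 0 < rho)
    (hβ0 : 0 < β) (hβ1 : β < 1) (hβK : β * K1 < 2)
    (T : ℕ) (i j : Fin T) :
    AT L1 K1 rho β T i j ≤ AT L1 K1 rho β (T + 1) i.castSucc j.castSucc := by
  have hden : 0 < 1 - β * K1 / 2 := by linarith
  have hL : L1 ≤ Lbar L1 K1 β := by
    rw [Lbar, le_div_iff₀ hden]
    nlinarith [mul_pos hβ0 hK1]
  have hjT : (j : ℕ) < T := j.isLt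
  have hiT : (i : ℕ) < T := i.isLt
  simp only [AT, Fin.coe_castSucc]
  have hne : ¬((j : ℕ) + 1 = T + 1) := by omega
  rw [if_neg hne]
  by_cases h1 : (j : ℕ) + 1 = T
  · rw [if_pos h1]
    have h2 : ¬((j : ℕ) + 1 = (i : ℕ)) := by omega
    have h3 : (i : ℕ) ≤ (j : ℕ) := by omega
    rw [if_neg h2, if_pos h3]
    have hexp : (j : ℕ) - (i : ℕ) + 1 = T - (i : ℕ) := by omega
    rw [hexp]
    have hb : (0:ℝ) ≤ β ^ (T - (i : ℕ)) := by positivity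
    have hmul : L1 * K1 / rho ≤ Lbar L1 K1 β * K1 / rho := by
      gcongr
    exact mul_le_mul_of_nonneg_right hmul hb
  · rw [if_neg h1]

end aux

/-- Monotonicity of the spectral radii: `ρ(A_T) ≤ ρ(A_{T+1})`. -/
theorem stmt3 (L1 K1 rho β : ℝ)
    (hL1 : 0 < L1) (hK1 : 0 < K1) (hrho : 0 < rho)
    (hβ0 : 0 < β) (hβ1 : β < 1) (hβK : β * K1 < 2)
    (T : ℕ) (hT : 1 ≤ T) :
    specRad (AT L1 K1 rho β T) ≤ specRad (AT L1 K1 rho β (T + 1)) := by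
  exact specRad_mono (AT L1 K1 rho β T) (AT L1 K1 rho β (T + 1))
    (AT_nonneg hL1 hK1 hrho hβ0 hβ1 hβK (T + 1))
    (AT_nonneg hL1 hK1 hrho hβ0 hβ1 hβK T)
    (AT_le hL1 hK1 hrho hβ0 hβ1 hβK T)
end

section
/- Let T ≥ 2 be an integer and suppose h ∈ ℝ^T satisfies A_T h = ρ(A_T) h. Then T_{ρ(A_T)} h = ρ(A_T) h, where T_λ (for λ ∈ ℝ) is the T×T real matrix that is tridiagonal with every diagonal entry equal to −K̄β, every subdiagonal entry equal to K̂, every superdiagonal entry equal to λβ, except that its (T,T) entry is −K̄β + r. -/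
noncomputable section

/-- The `T × T` tridiagonal matrix `T_λ`: every diagonal entry `-K̄β`, every subdiagonal
entry `K̂`, every superdiagonal entry `λβ`, except that the `(T,T)` entry is `-K̄β + r`. -/
def TT (L1 K1 rho β lam : ℝ) (T : ℕ) : Matrix (Fin T) (Fin T) ℝ :=
  fun i j =>
    if (j : ℕ) = (i : ℕ) + 1 then lam * β
    else if (i : ℕ) = (j : ℕ) + 1 then Khat L1 K1 rho β
    else if (i : ℕ) = (j : ℕ) then
      (if (i : ℕ) + 1 = T then -(Kbar L1 K1 rho β * β) + rconst L1 K1 rho β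
       else -(Kbar L1 K1 rho β * β))
    else 0

end

/-- If `A_T h = ρ(A_T) h` then `T_{ρ(A_T)} h = ρ(A_T) h`. -/
theorem stmt4 (L1 K1 rho β : ℝ)
    (hL1 : 0 < L1) (hK1 : 0 < K1) (hrho : 0 < rho)
    (hβ0 : 0 < β) (hβ1 : β < 1) (hβK : β * K1 < 2)
    (T : ℕ) (hT : 2 ≤ T)
    (h : Fin T → ℝ)
    (hh : (AT L1 K1 rho β T).mulVec h = specRad (AT L1 K1 rho β T) • h) :
    (TT L1 K1 rho β (specRad (AT L1 K1 rho β T)) T).mulVec h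
      = specRad (AT L1 K1 rho β T) • h := by
  set lam := specRad (AT L1 K1 rho β T) with hlam
  have hhf : ∀ i : Fin T, (AT L1 K1 rho β T).mulVec h i = lam * h i := by
    intro i
    rw [hh]; simp [Pi.smul_apply, smul_eq_mul]
  funext i
  simp only [Pi.smul_apply, smul_eq_mul]
  by_cases hi : (i : ℕ) + 1 = T
  · -- last row: TT row i = AT row i
    have rowEq : ∀ j : Fin T, TT L1 K1 rho β lam T i j = AT L1 K1 rho β T i j := by
      intro j
      have hjT : (j : ℕ) < T := j.isLt
      simp only [TT, AT]
      rcases Nat.lt_trichotomy ((j : ℕ) + 1) (i : ℕ) with hc | hc | hc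
      · rw [if_neg (by omega), if_neg (by omega), if_neg (by omega),
          if_neg (by omega), if_neg (by omega), if_neg (by omega)]
      · rw [if_neg (by omega), if_pos (by omega), if_neg (by omega), if_pos hc]
        simp only [Khat]; ring
      · -- j + 1 > i, and j < T = i + 1, so j = i
        have hji : (j : ℕ) = (i : ℕ) := by omega
        rw [if_neg (by omega), if_neg (by omega), if_pos hji.symm, if_pos hi,
          if_pos (by omega)]
        have hTi : T - (i : ℕ) = 1 := by omega
        rw [hTi, pow_one]
        simp only [rconst]; ring
    have : (TT L1 K1 rho β lam T).mulVec h i = (AT L1 K1 rho β T).mulVec h i := by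
      simp only [Matrix.mulVec, dotProduct]
      exact Finset.sum_congr rfl fun j _ => by rw [rowEq j]
    rw [this, hhf i]
  · have hi' : (i : ℕ) + 1 < T := lt_of_le_of_ne (Nat.succ_le_of_lt i.isLt) hi
    set i' : Fin T := ⟨(i : ℕ) + 1, hi'⟩ with hi'def
    have hvi' : (i' : ℕ) = (i : ℕ) + 1 := rfl
    have rowEq : ∀ j : Fin T, TT L1 K1 rho β lam T i j
        = AT L1 K1 rho β T i j - β * AT L1 K1 rho β T i' j
          + (if j = i' then lam * β else 0) := by
      intro j
      have hjT : (j : ℕ) < T := j.isLt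
      have hje : (j = i') ↔ ((j : ℕ) = (i : ℕ) + 1) := by
        constructor
        · intro hjj; rw [hjj]
        · intro hjj; exact Fin.ext hjj
      simp only [TT, AT, hvi']
      rcases Nat.lt_trichotomy ((j : ℕ) + 1) (i : ℕ) with hc | hc | hc
      · -- j + 1 < i : everything 0
        rw [if_neg (by omega), if_neg (by omega), if_neg (by omega),
          if_neg (by omega), if_neg (by omega), if_neg (by omega),
          if_neg (by omega), if_neg (by omega), if_neg (by omega),
          if_neg (show ¬ j = i' from fun hx => by have := hje.mp hx; omega)]
        ring
      · -- j + 1 = i : subdiagonal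
        rw [if_neg (by omega), if_pos (by omega), if_neg (by omega), if_pos hc,
          if_neg (by omega), if_neg (by omega), if_neg (by omega),
          if_neg (show ¬ j = i' from fun hx => by have := hje.mp hx; omega)]
        simp only [Khat]; ring
      · -- j ≥ i
        rcases Nat.lt_trichotomy (j : ℕ) ((i : ℕ) + 1) with hd | hd | hd
        · -- j = i : diagonal
          have hji : (j : ℕ) = (i : ℕ) := by omega
          rw [if_neg (by omega), if_neg (by omega), if_pos hji.symm, if_neg hi,
            if_neg (by omega), if_neg (by omega), if_pos (by omega),
            if_neg (by omega), if_pos (by omega),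
            if_neg (show ¬ j = i' from fun hx => by have := hje.mp hx; omega)]
          have h1 : (j : ℕ) - (i : ℕ) + 1 = 1 := by omega
          rw [h1, pow_one]; ring
        · -- j = i + 1 : superdiagonal
          rw [if_pos hd, if_pos (hje.mpr hd)]
          by_cases hjl : (j : ℕ) + 1 = T
          · rw [if_pos hjl, if_pos hjl]
            have hp : T - (i : ℕ) = (T - ((i : ℕ) + 1)) + 1 := by omega
            rw [hp, pow_succ]; ring
          · rw [if_neg hjl, if_neg (by omega), if_pos (by omega),
              if_neg hjl, if_neg (by omega), if_pos (by omega)]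
            have h2 : (j : ℕ) - (i : ℕ) + 1 = 2 := by omega
            have h3 : (j : ℕ) - ((i : ℕ) + 1) + 1 = 1 := by omega
            rw [h2, h3, pow_one]; ring
        · -- j > i + 1
          rw [if_neg (by omega), if_neg (by omega), if_neg (by omega),
            if_neg (show ¬ j = i' from fun hx => by have := hje.mp hx; omega)]
          by_cases hjl : (j : ℕ) + 1 = T
          · rw [if_pos hjl, if_pos hjl]
            have hp : T - (i : ℕ) = (T - ((i : ℕ) + 1)) + 1 := by omega
            rw [hp, pow_succ]; ring
          · rw [if_neg hjl, if_neg (by omega), if_pos (by omega),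
              if_neg hjl, if_neg (by omega), if_pos (by omega)]
            have hp : (j : ℕ) - (i : ℕ) + 1 = ((j : ℕ) - ((i : ℕ) + 1) + 1) + 1 := by omega
            rw [hp, pow_succ]; ring
    have expand : (TT L1 K1 rho β lam T).mulVec h i
        = (AT L1 K1 rho β T).mulVec h i - β * (AT L1 K1 rho β T).mulVec h i'
          + lam * β * h i' := by
      simp only [Matrix.mulVec, dotProduct]
      have step : ∀ j : Fin T, TT L1 K1 rho β lam T i j * h j
          = AT L1 K1 rho β T i j * h j - β * (AT L1 K1 rho β T i' j * h j)
            + (if j = i' then lam * β * h j else 0) := by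
        intro j
        rw [rowEq j]
        split_ifs <;> ring
      calc ∑ j, TT L1 K1 rho β lam T i j * h j
          = ∑ j, (AT L1 K1 rho β T i j * h j - β * (AT L1 K1 rho β T i' j * h j)
              + (if j = i' then lam * β * h j else 0)) :=
            Finset.sum_congr rfl fun j _ => step j
        _ = (∑ j, AT L1 K1 rho β T i j * h j)
              - β * (∑ j, AT L1 K1 rho β T i' j * h j) + lam * β * h i' := by
            rw [Finset.sum_add_distrib, Finset.sum_sub_distrib, ← Finset.mul_sum,
              Finset.sum_ite_eq' Finset.univ i' (fun j => lam * β * h j)]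
            simp
    rw [expand, hhf i, hhf i']
    ring
end

section
/- Let T ≥ 2 be an integer such that K̂·cos²(π/(T+1)) − K̄ > 0. Then at least one of the following two inequalities holds: either √(K̂β)·cos(π/(T+1)) + √((K̂·cos²(π/(T+1)) − K̄)·β) ≤ √(ρ(A_T)), or √(ρ(A_T)) ≤ √(K̂β)·cos(π/(T+1)) − √((K̂·cos²(π/(T+1)) − K̄)·β). -/
open Filter Finset


attribute [local instance] Matrix.linftyOpNormedRing Matrix.linftyOpNormedAlgebra

lemma aux_le_specRad {n : ℕ} (hn : 0 < n) (A : Matrix (Fin n) (Fin n) ℝ)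
    (hA : ∀ i j, 0 ≤ A i j) (v : Fin n → ℝ) (hv : ∀ i, 0 < v i) {lam : ℝ} (hlam : 0 < lam)
    (h : ∀ i, lam * v i ≤ A.mulVec v i) : lam ≤ specRad A := by
  have i₀ : Fin n := ⟨0, hn⟩
  set Ac : Matrix (Fin n) (Fin n) ℂ := A.map Complex.ofReal with hAc
  haveI : Nontrivial (Matrix (Fin n) (Fin n) ℂ) :=
    ⟨⟨0, 1, fun h => by simpa using congrFun (congrFun h i₀) i₀⟩⟩
  -- powers
  have hmap : ∀ k : ℕ, Ac ^ k = (A ^ k).map Complex.ofReal := by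
    intro k
    induction k with
    | zero => simp [Matrix.map_one Complex.ofReal Complex.ofReal_zero Complex.ofReal_one]
    | succ k ih =>
        rw [pow_succ, pow_succ, ih, hAc]
        exact (Matrix.map_mul (f := Complex.ofRealHom)).symm
  have hpow : ∀ k : ℕ, (∀ i j, 0 ≤ (A ^ k) i j) ∧ (∀ i, lam ^ k * v i ≤ (A ^ k).mulVec v i) := by
    intro k
    induction k with
    | zero =>
        refine ⟨fun i j => ?_, fun i => ?_⟩
        · rw [pow_zero]
          by_cases hij : i = j <;> simp [Matrix.one_apply, hij]
        · simp [Matrix.one_mulVec]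
    | succ k ih =>
        obtain ⟨ih1, ih2⟩ := ih
        constructor
        · intro i j
          rw [pow_succ', Matrix.mul_apply]
          exact Finset.sum_nonneg fun l _ => mul_nonneg (hA i l) (ih1 l j)
        · intro i
          rw [show A ^ (k + 1) = A * A ^ k from pow_succ' A k, ← Matrix.mulVec_mulVec]
          have h1 : ∀ j, lam ^ k * v j ≤ (A ^ k).mulVec v j := ih2
          have h2 : A.mulVec (fun j => lam ^ k * v j) i ≤ A.mulVec ((A ^ k).mulVec v) i := by
            simp only [Matrix.mulVec, dotProduct]
            exact Finset.sum_le_sum fun j _ =>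
              mul_le_mul_of_nonneg_left (h1 j) (hA i j)
          have h3 : A.mulVec (fun j => lam ^ k * v j) i = lam ^ k * A.mulVec v i := by
            simp only [Matrix.mulVec, dotProduct, Finset.mul_sum]
            exact Finset.sum_congr rfl fun j _ => by ring
          calc lam ^ (k + 1) * v i = lam ^ k * (lam * v i) := by ring
            _ ≤ lam ^ k * A.mulVec v i := by
                exact mul_le_mul_of_nonneg_left (h i) (by positivity)
            _ = A.mulVec (fun j => lam ^ k * v j) i := h3.symm
            _ ≤ _ := h2
  -- norm lower bound
  set B : ℝ := ∑ j, v j with hB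
  have hB0 : 0 < B := by
    have := Finset.single_le_sum (f := v) (fun j _ => (hv j).le) (Finset.mem_univ i₀)
    exact lt_of_lt_of_le (hv i₀) this
  have hnorm : ∀ k : ℕ, lam ^ k * v i₀ ≤ ‖Ac ^ k‖ * B := by
    intro k
    have h1 : lam ^ k * v i₀ ≤ (A ^ k).mulVec v i₀ := (hpow k).2 i₀
    have h2 : (A ^ k).mulVec v i₀ ≤ (∑ j, (A ^ k) i₀ j) * B := by
      simp only [Matrix.mulVec, dotProduct, Finset.sum_mul]
      refine Finset.sum_le_sum fun j _ => ?_
      have hvB : v j ≤ B :=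
        Finset.single_le_sum (f := v) (fun l _ => (hv l).le) (Finset.mem_univ j)
      exact mul_le_mul_of_nonneg_left hvB ((hpow k).1 i₀ j)
    have h3 : (∑ j, (A ^ k) i₀ j) ≤ ‖Ac ^ k‖ := by
      have hle : (∑ j, ‖(Ac ^ k) i₀ j‖₊) ≤ ‖Ac ^ k‖₊ := by
        rw [Matrix.linfty_opNNNorm_def]
        exact Finset.le_sup (f := fun i => ∑ j, ‖(Ac ^ k) i j‖₊) (Finset.mem_univ i₀)
      have hle' : ((∑ j, ‖(Ac ^ k) i₀ j‖₊ : NNReal) : ℝ) ≤ ‖Ac ^ k‖ := hle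
      calc (∑ j, (A ^ k) i₀ j) ≤ ∑ j, ‖(Ac ^ k) i₀ j‖ := by
            refine Finset.sum_le_sum fun j _ => ?_
            rw [hmap k]
            simp only [Matrix.map_apply, Complex.norm_real, Real.norm_eq_abs]
            exact le_abs_self _
        _ = ((∑ j, ‖(Ac ^ k) i₀ j‖₊ : NNReal) : ℝ) := by push_cast; rfl
        _ ≤ ‖Ac ^ k‖ := hle'
    calc lam ^ k * v i₀ ≤ (A ^ k).mulVec v i₀ := h1
      _ ≤ (∑ j, (A ^ k) i₀ j) * B := h2
      _ ≤ ‖Ac ^ k‖ * B := mul_le_mul_of_nonneg_right h3 hB0.le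
  -- spectrum facts
  set S : Set ℝ := {x : ℝ | ∃ μ : ℂ, μ ∈ spectrum ℂ Ac ∧ x = ‖μ‖} with hS
  have hSim : S = (fun μ : ℂ => ‖μ‖) '' spectrum ℂ Ac := by
    ext x; constructor
    · rintro ⟨μ, hμ, rfl⟩; exact ⟨μ, hμ, rfl⟩
    · rintro ⟨μ, hμ, rfl⟩; exact ⟨μ, hμ, rfl⟩
  have hScpt : IsCompact S := by
    rw [hSim]; exact (spectrum.isCompact Ac).image continuous_norm
  have hSne : S.Nonempty := by
    obtain ⟨μ, hμ⟩ := spectrum.nonempty Ac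
    exact ⟨‖μ‖, μ, hμ, rfl⟩
  have hSbdd : BddAbove S := hScpt.bddAbove
  have hspec : specRad A = sSup S := rfl
  by_contra hcon
  push_neg at hcon
  rw [hspec] at hcon
  set m : ℝ := sSup S with hm
  have hm0 : 0 ≤ m := by
    obtain ⟨x, μ, hμ, rfl⟩ := hSne
    exact le_trans (norm_nonneg μ) (le_csSup hSbdd ⟨μ, hμ, rfl⟩)
  have hsr : spectralRadius ℂ Ac ≤ ENNReal.ofReal m := by
    rw [spectralRadius]
    refine iSup₂_le fun μ hμ => ?_
    have h1 : ‖μ‖ ≤ m := le_csSup hSbdd ⟨μ, hμ, rfl⟩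
    have h2 : (‖μ‖₊ : ENNReal) = ENNReal.ofReal ‖μ‖ := (ofReal_norm μ).symm
    rw [h2]
    exact ENNReal.ofReal_le_ofReal (by exact h1)
  set r : ℝ := (m + lam) / 2 with hr
  have hmr : m < r := by simp only [hr]; linarith
  have hrlam : r < lam := by simp only [hr]; linarith
  have hr0 : 0 < r := by simp only [hr]; linarith
  have htends := spectrum.pow_nnnorm_pow_one_div_tendsto_nhds_spectralRadius Ac
  have hlt : spectralRadius ℂ Ac < ENNReal.ofReal r :=
    lt_of_le_of_lt hsr (by
      rw [ENNReal.ofReal_lt_ofReal_iff hr0]; exact hmr)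
  have hev : ∀ᶠ k : ℕ in atTop, (‖Ac ^ k‖₊ : ENNReal) ^ (1 / (k : ℝ)) < ENNReal.ofReal r :=
    htends.eventually_lt_const hlt
  have hev2 : ∀ᶠ k : ℕ in atTop, (B / v i₀) < (lam / r) ^ k := by
    have h1 : (1 : ℝ) < lam / r := (one_lt_div hr0).2 hrlam
    exact (tendsto_pow_atTop_atTop_of_one_lt h1).eventually_gt_atTop _
  have hev3 : ∀ᶠ k : ℕ in atTop, 1 ≤ k := Filter.eventually_ge_atTop 1
  obtain ⟨k, hk1, hk2, hk3⟩ := (hev.and (hev2.and hev3)).exists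
  -- from hk1 get ‖Ac ^ k‖ < r ^ k
  have hkR : (0 : ℝ) < k := by exact_mod_cast hk3
  have h4 : (‖Ac ^ k‖₊ : ENNReal) < (ENNReal.ofReal r) ^ (k : ℝ) := by
    have := ENNReal.rpow_lt_rpow hk1 hkR
    rwa [← ENNReal.rpow_mul, one_div, inv_mul_cancel₀ (ne_of_gt hkR),
      ENNReal.rpow_one] at this
  have h5 : ‖Ac ^ k‖ < r ^ k := by
    have e1 : (ENNReal.ofReal r) ^ (k : ℝ) = ENNReal.ofReal (r ^ k) := by
      rw [ENNReal.rpow_natCast, ← ENNReal.ofReal_pow hr0.le]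
    rw [e1, ← enorm_eq_nnnorm, ← ofReal_norm] at h4
    have := (ENNReal.ofReal_lt_ofReal_iff_of_nonneg (norm_nonneg _)).1 h4
    exact this
  have h6 : lam ^ k * v i₀ ≤ ‖Ac ^ k‖ * B := hnorm k
  have h7 : ‖Ac ^ k‖ * B < r ^ k * B := by
    exact mul_lt_mul_of_pos_right h5 hB0
  have h8 : B * r ^ k < lam ^ k * v i₀ := by
    have : B / v i₀ < lam ^ k / r ^ k := by rwa [div_pow] at hk2
    have hrk : (0 : ℝ) < r ^ k := by positivity
    rw [div_lt_div_iff₀ (hv i₀) hrk] at this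
    linarith
  linarith


-- telescoping key inequality
lemma aux_key (T : ℕ) (hT : 2 ≤ T) (β lam Kb Kh g LK : ℝ) (w : ℕ → ℝ)
    (hβ0 : 0 < β) (hKb0 : 0 < Kb) (hLK0 : 0 < LK) (hg0 : 0 < g)
    (hg : Kh = Kb + g)
    (hwT1 : w (T+1) = 0) (hwT : 0 < w T)
    (hrec : ∀ k, β*lam*w (k+2) + Kh * w k = (lam + β*Kb) * w (k+1)) :
    ∀ i0 : ℕ, i0 < T →
      lam * w (i0+1) ≤ Kh * w i0 + g * (∑ d ∈ range (T-1-i0), β^(d+1) * w (i0+1+d))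
        + LK * β^(T-i0) * w T := by
  have hE : ∀ i, lam * w (i+1) - Kh * w i
      = β*g*w (i+1) + β * (lam * w (i+2) - Kh * w (i+1)) := by
    intro i
    linear_combination -(hrec i) + β * w (i+1) * hg
  have htel : ∀ n, ∀ i, lam * w (i+1) - Kh * w i
      = g * (∑ d ∈ range n, β^(d+1) * w (i+1+d))
        + β^n * (lam * w (i+n+1) - Kh * w (i+n)) := by
    intro n
    induction n with
    | zero => intro i; simp
    | succ n ih =>
        intro i
        rw [Finset.sum_range_succ]
        have h1 := ih i
        have h2 := hE (i+n)
        have e : i+1+n = i+n+1 := by omega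
        rw [e]
        have e6 : i+n+1+1 = i+n+2 := by omega
        rw [show i + (n+1) + 1 = i + n + 2 from by omega, show i + (n+1) = i + n + 1 from by omega]
        linear_combination h1 + β^n * h2
  intro i0 hi0
  obtain ⟨t, rfl⟩ : ∃ t, T = t + 2 := ⟨T-2, by omega⟩
  have hb : Kh * w (t+1) = (lam + β*Kb) * w (t+2) := by
    have h := hrec (t+1)
    have e : t+1+2 = t+2+1 := by omega
    rw [e, hwT1] at h
    linarith
  have h3 := htel (t+1-i0) i0
  have e2 : i0 + (t+1-i0) = t+1 := by omega
  rw [e2] at h3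
  have e3 : t+2-1-i0 = t+1-i0 := by omega
  have e4 : t+2-i0 = (t+1-i0)+1 := by omega
  rw [e3, e4]
  have e5 : t+1+1 = t+2 := by omega
  rw [e5] at h3
  have hnn : 0 ≤ β^(t+1-i0) := by positivity
  have h6 : 0 ≤ β^(t+1-i0) * (β * Kb * w (t+2)) :=
    mul_nonneg hnn (mul_nonneg (mul_nonneg hβ0.le hKb0.le) hwT.le)
  have h7 : 0 ≤ LK * (β^(t+1-i0)*β) * w (t+2) :=
    mul_nonneg (mul_nonneg hLK0.le (mul_nonneg hnn hβ0.le)) hwT.le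
  -- from h3 : lam*w(i0+1) - Kh*w i0 = g*Σ + β^(t+1-i0) * (lam*w(t+2) - Kh*w(t+1))
  -- and hb : Kh*w(t+1) = (lam+β*Kb)*w(t+2)
  have h8 : β^(t+1-i0) * (Kh * w (t+1)) = β^(t+1-i0) * ((lam + β*Kb) * w (t+2)) := by rw [hb]
  have hXl : β^(t+1-i0) * (lam * w (t+2) - Kh * w (t+1))
      = -(β^(t+1-i0) * (β * Kb * w (t+2))) := by linear_combination -h8
  rw [hXl] at h3
  have h10 : LK * β^(t+1-i0+1) * w (t+2) = LK * (β^(t+1-i0)*β) * w (t+2) := by ring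
  rw [h10]
  linarith [h3, h6, h7]


lemma aux_mulVec (L1 K1 rho β : ℝ) (T : ℕ) (hT : 2 ≤ T) (w : ℕ → ℝ) (hw0 : w 0 = 0)
    (i : Fin T) :
    (AT L1 K1 rho β T).mulVec (fun j => w ((j:ℕ)+1)) i
      = (Kbar L1 K1 rho β + Lbar L1 K1 β * K1 / rho) * w (i:ℕ)
        + (Lbar L1 K1 β * K1 / rho) *
            (∑ d ∈ Finset.range (T-1-(i:ℕ)), β^(d+1) * w ((i:ℕ)+1+d))
        + (L1 * K1 / rho) * β^(T-(i:ℕ)) * w T := by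
  obtain ⟨t, rfl⟩ : ∃ t, T = t + 2 := ⟨T-2, by omega⟩
  set Kh : ℝ := Kbar L1 K1 rho β + Lbar L1 K1 β * K1 / rho with hKh
  set g : ℝ := Lbar L1 K1 β * K1 / rho with hgdef
  set i0 : ℕ := (i : ℕ) with hi0def
  have hi0 : i0 < t + 2 := i.isLt
  set F : ℕ → ℝ := fun j =>
    (if j + 1 = t+2 then (L1 * K1 / rho) * β ^ (t+2 - i0)
     else if j + 1 = i0 then Kh
     else if i0 ≤ j then g * β ^ (j - i0 + 1)
     else 0) * w (j+1) with hF
  have step1 : (AT L1 K1 rho β (t+2)).mulVec (fun j => w ((j:ℕ)+1)) i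
      = ∑ j ∈ range (t+2), F j := by
    rw [← Fin.sum_univ_eq_sum_range F (t+2)]
    simp only [Matrix.mulVec, dotProduct, AT, F]
    rfl
  rw [step1, Finset.sum_range_succ]
  have hFt : F (t+1) = (L1 * K1 / rho) * β ^ (t+2 - i0) * w (t+2) := by
    simp only [F]
    norm_num
  rw [hFt]
  have hsplit : ∑ j ∈ range (t+1), F j
      = (∑ j ∈ range (t+1), if j + 1 = i0 then Kh * w (j+1) else 0)
        + (∑ j ∈ range (t+1), if i0 ≤ j then g * β ^ (j - i0 + 1) * w (j+1) else 0) := by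
    rw [← Finset.sum_add_distrib]
    refine Finset.sum_congr rfl fun j hj => ?_
    have hj' : j < t + 1 := Finset.mem_range.1 hj
    simp only [F]
    rw [if_neg (by omega : ¬ (j+1 = t+2))]
    by_cases h1 : j + 1 = i0
    · rw [if_pos h1, if_pos h1, if_neg (by omega : ¬ (i0 ≤ j))]; ring
    · rw [if_neg h1, if_neg h1]
      by_cases h2 : i0 ≤ j
      · rw [if_pos h2, if_pos h2]; ring
      · rw [if_neg h2, if_neg h2]; ring
  have hsum1 : (∑ j ∈ range (t+1), if j + 1 = i0 then Kh * w (j+1) else 0)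
      = Kh * w i0 := by
    rcases Nat.eq_zero_or_pos i0 with h0 | hpos
    · rw [h0, hw0, mul_zero]
      exact Finset.sum_eq_zero fun j _ => if_neg (by omega)
    · obtain ⟨k, hik⟩ : ∃ k, i0 = k + 1 := ⟨i0 - 1, by omega⟩
      rw [hik]
      rw [Finset.sum_eq_single k]
      · rw [if_pos rfl]
      · intro j _ hjk; exact if_neg (by omega)
      · intro hk'; exact absurd (Finset.mem_range.2 (by omega)) hk'
  have hsum2 : (∑ j ∈ range (t+1), if i0 ≤ j then g * β ^ (j - i0 + 1) * w (j+1) else 0)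
      = g * (∑ d ∈ Finset.range (t+2-1-i0), β^(d+1) * w (i0+1+d)) := by
    conv_lhs => rw [Finset.range_eq_Ico]
    rw [← Finset.sum_Ico_consecutive _ (Nat.zero_le i0) (by omega : i0 ≤ t+1)]
    rw [Finset.sum_eq_zero (fun j hj => if_neg (by
      have := (Finset.mem_Ico.1 hj).2; omega)), zero_add]
    rw [Finset.sum_congr rfl (fun j hj => if_pos (Finset.mem_Ico.1 hj).1)]
    rw [Finset.sum_Ico_eq_sum_range]
    rw [show t+2-1-i0 = t+1-i0 from by omega, Finset.mul_sum]
    refine Finset.sum_congr rfl fun d _ => ?_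
    rw [show i0 + d - i0 = d from by omega, show i0 + d + 1 = i0 + 1 + d from by omega]
    ring
  rw [hsplit, hsum1, hsum2]

/-- Quadratic-formula dichotomy for `√(ρ(A_T))` (Proposition 3.7). -/
theorem stmt6 (L1 K1 rho β : ℝ)
    (hL1 : 0 < L1) (hK1 : 0 < K1) (hrho : 0 < rho)
    (hβ0 : 0 < β) (hβ1 : β < 1) (hβK : β * K1 < 2)
    (T : ℕ) (hT : 2 ≤ T)
    (hcos : 0 < Khat L1 K1 rho β * (Real.cos (Real.pi / ((T : ℝ) + 1))) ^ 2
        - Kbar L1 K1 rho β) :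
    Real.sqrt (Khat L1 K1 rho β * β) * Real.cos (Real.pi / ((T : ℝ) + 1))
        + Real.sqrt ((Khat L1 K1 rho β * (Real.cos (Real.pi / ((T : ℝ) + 1))) ^ 2
            - Kbar L1 K1 rho β) * β)
      ≤ Real.sqrt (specRad (AT L1 K1 rho β T))
    ∨ Real.sqrt (specRad (AT L1 K1 rho β T))
      ≤ Real.sqrt (Khat L1 K1 rho β * β) * Real.cos (Real.pi / ((T : ℝ) + 1))
        - Real.sqrt ((Khat L1 K1 rho β * (Real.cos (Real.pi / ((T : ℝ) + 1))) ^ 2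
            - Kbar L1 K1 rho β) * β) := by
  have hT0 : 0 < T := by omega
  set θ : ℝ := Real.pi / ((T : ℝ) + 1) with hθdef
  set c : ℝ := Real.cos θ with hcdef
  have hθpos : 0 < θ := by rw [hθdef]; positivity
  have h3 : (3:ℝ) ≤ (T:ℝ) + 1 := by
    have : (2:ℝ) ≤ (T:ℝ) := by exact_mod_cast hT
    linarith
  have hθlt : θ < Real.pi / 2 := by
    rw [hθdef]
    have h1 : Real.pi / ((T:ℝ)+1) ≤ Real.pi / 3 := by
      rw [div_le_div_iff₀ (by positivity) (by norm_num : (0:ℝ) < 3)]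
      nlinarith [Real.pi_pos]
    have h2 : Real.pi / 3 < Real.pi / 2 := by linarith [Real.pi_pos]
    linarith
  have hcpos : 0 < c := by
    rw [hcdef]
    exact Real.cos_pos_of_mem_Ioo ⟨by linarith [Real.pi_pos], hθlt⟩
  clear_value θ c
  have hden : 0 < 1 - β * K1 / 2 := by nlinarith
  have hLbar : 0 < Lbar L1 K1 β := div_pos hL1 hden
  have h1β : 0 < 1 - β := by linarith
  have h2ρ : 0 < 2 * rho * (1 - β) := by nlinarith [mul_pos hrho h1β]
  have hKbar : 0 < Kbar L1 K1 rho β := by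
    have h1 : 0 < 3 * K1 / 2 := by linarith
    have h2 : 0 < K1 * Lbar L1 K1 β / (2 * rho * (1 - β)) :=
      div_pos (mul_pos hK1 hLbar) h2ρ
    have h0 : Kbar L1 K1 rho β = 3 * K1 / 2 + K1 * Lbar L1 K1 β / (2 * rho * (1 - β)) := rfl
    linarith
  have hg0 : 0 < Lbar L1 K1 β * K1 / rho := div_pos (mul_pos hLbar hK1) hrho
  have hKhat : 0 < Khat L1 K1 rho β := by
    have h0 : Khat L1 K1 rho β = Kbar L1 K1 rho β + K1 * Lbar L1 K1 β / rho := rfl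
    have h2 : 0 < K1 * Lbar L1 K1 β / rho := div_pos (mul_pos hK1 hLbar) hrho
    linarith
  set a : ℝ := Real.sqrt (Khat L1 K1 rho β * β) * c with hadef
  set b : ℝ := Real.sqrt ((Khat L1 K1 rho β * c ^ 2 - Kbar L1 K1 rho β) * β) with hbdef
  have hapos : 0 < a := by
    rw [hadef]; exact mul_pos (Real.sqrt_pos.2 (mul_pos hKhat hβ0)) hcpos
  have hbpos : 0 < b := by
    rw [hbdef]; exact Real.sqrt_pos.2 (mul_pos hcos hβ0)
  have ha2 : a ^ 2 = Khat L1 K1 rho β * β * c ^ 2 := by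
    rw [hadef, mul_pow, Real.sq_sqrt (mul_pos hKhat hβ0).le]
  have hb2 : b ^ 2 = (Khat L1 K1 rho β * c ^ 2 - Kbar L1 K1 rho β) * β := by
    rw [hbdef]; exact Real.sq_sqrt (mul_pos hcos hβ0).le
  set lam : ℝ := (a + b) ^ 2 with hlamdef
  clear_value a b
  have hab0 : 0 < a + b := by linarith
  have hlam0 : 0 < lam := by rw [hlamdef]; positivity
  have hD : Real.sqrt (β * lam * Khat L1 K1 rho β)
      = Real.sqrt (Khat L1 K1 rho β * β) * (a + b) := by
    rw [hlamdef, show β * (a+b)^2 * Khat L1 K1 rho β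
        = (Khat L1 K1 rho β * β) * (a+b)^2 from by ring,
      Real.sqrt_mul (mul_pos hKhat hβ0).le, Real.sqrt_sq hab0.le]
  have hkey : lam + β * Kbar L1 K1 rho β
      = 2 * Real.sqrt (β * lam * Khat L1 K1 rho β) * c := by
    rw [hD, hlamdef]
    linear_combination (2*a + 2*b) * hadef + hb2 - ha2
  clear_value lam
  set q : ℝ := Real.sqrt (Khat L1 K1 rho β / (β * lam)) with hqdef
  have hq0 : 0 < q := by
    rw [hqdef]; exact Real.sqrt_pos.2 (div_pos hKhat (mul_pos hβ0 hlam0))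
  have hq2 : β * lam * q ^ 2 = Khat L1 K1 rho β := by
    rw [hqdef, Real.sq_sqrt (div_pos hKhat (mul_pos hβ0 hlam0)).le]
    field_simp
  have hqK : Real.sqrt (β * lam * Khat L1 K1 rho β) * q = Khat L1 K1 rho β := by
    rw [hqdef, ← Real.sqrt_mul (by nlinarith [mul_pos (mul_pos hβ0 hlam0) hKhat] :
        (0:ℝ) ≤ β * lam * Khat L1 K1 rho β)]
    rw [show β * lam * Khat L1 K1 rho β * (Khat L1 K1 rho β / (β * lam))
        = (Khat L1 K1 rho β) ^ 2 from by
      field_simp]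
    exact Real.sqrt_sq hKhat.le
  clear_value q
  set w : ℕ → ℝ := fun k => q ^ k * Real.sin ((k:ℝ) * θ) with hwdef
  clear_value w
  have hπ : ((T:ℝ)+1) * θ = Real.pi := by rw [hθdef]; field_simp
  have hw0 : w 0 = 0 := by simp [hwdef]
  have hwT1 : w (T+1) = 0 := by
    simp only [hwdef]
    have he : ((T+1 : ℕ):ℝ) * θ = Real.pi := by push_cast; exact hπ
    rw [he, Real.sin_pi, mul_zero]
  have hwpos : ∀ k, 1 ≤ k → k ≤ T → 0 < w k := by
    intro k h1 h2
    have hk1 : (1:ℝ) ≤ (k:ℝ) := by exact_mod_cast h1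
    have hk2 : (k:ℝ) ≤ (T:ℝ) := by exact_mod_cast h2
    have hpos : 0 < (k:ℝ) * θ := mul_pos (by linarith) hθpos
    have hkT : (k:ℝ) * θ ≤ (T:ℝ) * θ := mul_le_mul_of_nonneg_right hk2 hθpos.le
    have hTθ : (T:ℝ) * θ = Real.pi - θ := by linear_combination hπ
    have hlt : (k:ℝ) * θ < Real.pi := by linarith
    simp only [hwdef]
    exact mul_pos (pow_pos hq0 k) (Real.sin_pos_of_pos_of_lt_pi hpos hlt)
  have hrec : ∀ k : ℕ, β * lam * w (k+2) + Khat L1 K1 rho β * w k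
      = (lam + β * Kbar L1 K1 rho β) * w (k+1) := by
    intro k
    simp only [hwdef]
    have hx2 : ((k+2:ℕ):ℝ) * θ = ((k+1:ℕ):ℝ) * θ + θ := by push_cast; ring
    have hx0 : ((k:ℕ):ℝ) * θ = ((k+1:ℕ):ℝ) * θ - θ := by push_cast; ring
    rw [hx2, hx0, Real.sin_add, Real.sin_sub, ← hcdef]
    linear_combination
      (q^k * (Real.sin (((k+1:ℕ):ℝ) * θ) * c + Real.cos (((k+1:ℕ):ℝ) * θ) * Real.sin θ)) * hq2
      - (q^k * q * Real.sin (((k+1:ℕ):ℝ) * θ)) * hkey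
      - (2 * c * q^k * Real.sin (((k+1:ℕ):ℝ) * θ)) * hqK
  have hKh' : Kbar L1 K1 rho β + Lbar L1 K1 β * K1 / rho = Khat L1 K1 rho β := by
    unfold Khat; ring
  have hA : ∀ i j : Fin T, 0 ≤ AT L1 K1 rho β T i j := by
    intro i j
    unfold AT
    split_ifs
    · exact mul_nonneg (div_pos (mul_pos hL1 hK1) hrho).le (pow_nonneg hβ0.le _)
    · linarith [hKbar, hg0]
    · exact mul_nonneg hg0.le (pow_nonneg hβ0.le _)
    · exact le_refl 0
  have hv : ∀ i : Fin T, 0 < (fun j : Fin T => w ((j:ℕ)+1)) i := by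
    intro i
    have hi := i.isLt
    exact hwpos ((i:ℕ)+1) (by omega) (by omega)
  have hrow : ∀ i : Fin T, lam * (fun j : Fin T => w ((j:ℕ)+1)) i
      ≤ (AT L1 K1 rho β T).mulVec (fun j : Fin T => w ((j:ℕ)+1)) i := by
    intro i
    rw [aux_mulVec L1 K1 rho β T hT w hw0 i]
    exact aux_key T hT β lam (Kbar L1 K1 rho β)
      (Kbar L1 K1 rho β + Lbar L1 K1 β * K1 / rho) (Lbar L1 K1 β * K1 / rho)
      (L1 * K1 / rho) w hβ0 hKbar (div_pos (mul_pos hL1 hK1) hrho) hg0 rfl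
      hwT1 (hwpos T (by omega) le_rfl)
      (fun k => by rw [hKh']; exact hrec k) (i:ℕ) i.isLt
  have hmain : lam ≤ specRad (AT L1 K1 rho β T) :=
    aux_le_specRad hT0 _ hA _ hv hlam0 hrow
  left
  have h1 : Real.sqrt lam ≤ Real.sqrt (specRad (AT L1 K1 rho β T)) :=
    Real.sqrt_le_sqrt hmain
  rwa [hlamdef, Real.sqrt_sq hab0.le] at h1
end

section
/- Let T ≥ 2 be an integer and set j = r/√(ρ(A_T)·β·K̂). Every eigenvalue λ ∈ ℂ of the matrix T_{ρ(A_T)} can be written as λ = −K̄β + √(ρ(A_T)·β·K̂)·(z + 1/z) for some nonzero complex number z satisfying z^{2T+2} − j·z^{2T+1} + j·z − 1 = 0. -/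
private lemma sum_two_aux {N : ℕ} (f : Fin N → ℂ) (c₁ c₂ : Fin N) (h12 : c₁ ≠ c₂)
    (hf : ∀ j, j ≠ c₁ → j ≠ c₂ → f j = 0) : ∑ j, f j = f c₁ + f c₂ := by
  classical
  rw [← Finset.sum_subset (Finset.subset_univ ({c₁, c₂} : Finset (Fin N)))
      (fun x _ hx => by
        simp only [Finset.mem_insert, Finset.mem_singleton, not_or] at hx
        exact hf x hx.1 hx.2)]
  rw [Finset.sum_insert (by simpa using h12), Finset.sum_singleton]

private lemma sum_three_aux {N : ℕ} (f : Fin N → ℂ) (c₁ c₂ c₃ : Fin N)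
    (h12 : c₁ ≠ c₂) (h13 : c₁ ≠ c₃) (h23 : c₂ ≠ c₃)
    (hf : ∀ j, j ≠ c₁ → j ≠ c₂ → j ≠ c₃ → f j = 0) :
    ∑ j, f j = f c₁ + f c₂ + f c₃ := by
  classical
  rw [← Finset.sum_subset (Finset.subset_univ ({c₁, c₂, c₃} : Finset (Fin N)))
      (fun x _ hx => by
        simp only [Finset.mem_insert, Finset.mem_singleton, not_or] at hx
        exact hf x hx.1 hx.2.1 hx.2.2)]
  rw [Finset.sum_insert (by simp [h12, h13]), Finset.sum_insert (by simpa using h23),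
    Finset.sum_singleton, add_assoc]

/-- Every eigenvalue `λ ∈ ℂ` of `T_{ρ(A_T)}` has the form
`λ = -K̄β + √(ρ(A_T) β K̂) (z + 1/z)` for some nonzero root `z` of
`z^{2T+2} - j z^{2T+1} + j z - 1`, where `j = r / √(ρ(A_T) β K̂)`. -/
theorem stmt7 (L1 K1 rho β : ℝ)
    (hL1 : 0 < L1) (hK1 : 0 < K1) (hrho : 0 < rho)
    (hβ0 : 0 < β) (hβ1 : β < 1) (hβK : β * K1 < 2)
    (T : ℕ) (hT : 2 ≤ T)
    (hpos : 0 < specRad (AT L1 K1 rho β T))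
    (lam : ℂ)
    (hlam : lam ∈ spectrum ℂ
      ((TT L1 K1 rho β (specRad (AT L1 K1 rho β T)) T).map Complex.ofReal)) :
    ∃ z : ℂ, z ≠ 0 ∧
      z ^ (2 * T + 2)
          - (rconst L1 K1 rho β
              / Real.sqrt (specRad (AT L1 K1 rho β T) * β * Khat L1 K1 rho β) : ℝ)
            * z ^ (2 * T + 1)
          + (rconst L1 K1 rho β
              / Real.sqrt (specRad (AT L1 K1 rho β T) * β * Khat L1 K1 rho β) : ℝ) * z
          - 1 = 0 ∧
      lam = (-(Kbar L1 K1 rho β * β) : ℝ)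
          + (Real.sqrt (specRad (AT L1 K1 rho β T) * β * Khat L1 K1 rho β) : ℝ)
            * (z + 1 / z) := by
  classical
  obtain ⟨m, rfl⟩ : ∃ m, T = m + 2 := ⟨T - 2, by omega⟩
  set ρ : ℝ := specRad (AT L1 K1 rho β (m + 2)) with hρdef
  have hden : 0 < 1 - β * K1 / 2 := by nlinarith
  have hLbar : 0 < Lbar L1 K1 β := div_pos hL1 hden
  have hβ1' : 0 < 1 - β := by linarith
  have hKbar : 0 < Kbar L1 K1 rho β := by
    have h2 : 0 < K1 * Lbar L1 K1 β / (2 * rho * (1 - β)) :=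
      div_pos (mul_pos hK1 hLbar) (by nlinarith)
    unfold Kbar; linarith
  have hKhat : 0 < Khat L1 K1 rho β := by
    have h3 : 0 < K1 * Lbar L1 K1 β / rho := div_pos (mul_pos hK1 hLbar) hrho
    unfold Khat; linarith
  set sR : ℝ := Real.sqrt (ρ * β * Khat L1 K1 rho β) with hsRdef
  have hsR : 0 < sR := Real.sqrt_pos.mpr (mul_pos (mul_pos hpos hβ0) hKhat)
  have hs2R : sR ^ 2 = ρ * β * Khat L1 K1 rho β :=
    Real.sq_sqrt (le_of_lt (mul_pos (mul_pos hpos hβ0) hKhat))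
  set jC : ℂ := ((rconst L1 K1 rho β / sR : ℝ) : ℂ) with hjCdef
  set s : ℂ := (sR : ℂ) with hsdef
  have hsne : s ≠ 0 := by
    rw [hsdef]; exact_mod_cast hsR.ne'
  set aC : ℂ := ((ρ * β : ℝ) : ℂ) with haCdef
  have haC : aC ≠ 0 := by
    rw [haCdef]; exact_mod_cast (mul_pos hpos hβ0).ne'
  set bC : ℂ := ((Khat L1 K1 rho β : ℝ) : ℂ) with hbCdef
  have hbC : bC ≠ 0 := by
    rw [hbCdef]; exact_mod_cast hKhat.ne'
  set dC : ℂ := ((-(Kbar L1 K1 rho β * β) : ℝ) : ℂ) with hdCdef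
  set rC : ℂ := ((rconst L1 K1 rho β : ℝ) : ℂ) with hrCdef
  set M : Matrix (Fin (m + 2)) (Fin (m + 2)) ℂ :=
    (TT L1 K1 rho β ρ (m + 2)).map Complex.ofReal with hMdef
  have hs2C : s ^ 2 = aC * bC := by
    calc s ^ 2 = ((sR ^ 2 : ℝ) : ℂ) := by rw [hsdef]; push_cast; ring
    _ = ((ρ * β * Khat L1 K1 rho β : ℝ) : ℂ) := by rw [hs2R]
    _ = aC * bC := by rw [haCdef, hbCdef]; push_cast; ring
  have hjs : jC * s = rC := by
    rw [hjCdef, hsdef, hrCdef, ← Complex.ofReal_mul, div_mul_cancel₀ _ hsR.ne']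
  set μ : ℂ := (lam - dC) / s with hμdef
  obtain ⟨z, hzroot⟩ : ∃ z : ℂ, z ^ 2 - μ * z + 1 = 0 := by
    have hdeg : (Polynomial.X ^ 2 - Polynomial.C μ * Polynomial.X + 1 : Polynomial ℂ).degree = 2 := by
      compute_degree!
    obtain ⟨z, hz⟩ := Complex.exists_root
      (f := Polynomial.X ^ 2 - Polynomial.C μ * Polynomial.X + 1) (by rw [hdeg]; norm_num)
    exact ⟨z, by simpa [Polynomial.IsRoot] using hz⟩
  have hz0 : z ≠ 0 := by
    intro h; rw [h] at hzroot; simp at hzroot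
  set w : ℂ := z⁻¹ with hwdef
  have hw : z * w = 1 := mul_inv_cancel₀ hz0
  have hzsum : z + w = μ := by
    rw [hwdef]
    field_simp
    linear_combination hzroot
  have hμz : lam - dC = s * (z + w) := by
    rw [hzsum, hμdef]; field_simp
  have hlameq : lam = dC + s * (z + 1 / z) := by
    rw [one_div, ← hwdef]; linear_combination hμz
  refine ⟨z, hz0, ?_, hlameq⟩
  by_cases hz21 : z ^ 2 = 1
  · have h1 : z ^ (2 * (m + 2) + 2) = 1 := by
      rw [show 2 * (m + 2) + 2 = 2 * (m + 3) by ring, pow_mul, hz21, one_pow]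
    have h2 : z ^ (2 * (m + 2) + 1) = z := by
      rw [pow_succ, pow_mul, hz21, one_pow, one_mul]
    rw [h1, h2]; ring
  · -- eigenvector case
    have hzw_ne : z - w ≠ 0 := by
      intro h
      apply hz21
      have hzw : z = w := sub_eq_zero.mp h
      calc z ^ 2 = z * z := sq z
      _ = z * w := by rw [← hzw]
      _ = 1 := hw
    have hnu : ¬ IsUnit (algebraMap ℂ (Matrix (Fin (m + 2)) (Fin (m + 2)) ℂ) lam - M) :=
      spectrum.mem_iff.mp hlam
    have hdet : (algebraMap ℂ (Matrix (Fin (m + 2)) (Fin (m + 2)) ℂ) lam - M).det = 0 := by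
      by_contra h
      exact hnu ((Matrix.isUnit_iff_isUnit_det _).mpr (isUnit_iff_ne_zero.mpr h))
    obtain ⟨v, hvne, hvec⟩ := Matrix.exists_mulVec_eq_zero_iff.mpr hdet
    have hvEq : M.mulVec v = lam • v := by
      have h2 : (algebraMap ℂ (Matrix (Fin (m + 2)) (Fin (m + 2)) ℂ) lam).mulVec v = lam • v := by
        rw [Algebra.algebraMap_eq_smul_one, Matrix.smul_mulVec, Matrix.one_mulVec]
      rw [Matrix.sub_mulVec, h2, sub_eq_zero] at hvec
      exact hvec.symm
    have hrow : ∀ i : Fin (m + 2), ∑ j, M i j * v j = lam * v i := by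
      intro i
      have := congrFun hvEq i
      simpa [Matrix.mulVec, dotProduct] using this
    have hMe : ∀ i j : Fin (m + 2), M i j =
        if (j : ℕ) = (i : ℕ) + 1 then aC
        else if (i : ℕ) = (j : ℕ) + 1 then bC
        else if (i : ℕ) = (j : ℕ) then (if (i : ℕ) + 1 = m + 2 then dC + rC else dC)
        else 0 := by
      intro i j
      rw [hMdef]
      simp only [Matrix.map_apply, TT]
      split_ifs <;>
        (try simp only [haCdef, hbCdef, hdCdef, hrCdef]) <;> push_cast <;> try ring
    set V : ℕ → ℂ := fun n => if h : n < m + 2 then v ⟨n, h⟩ else 0 with hVdef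
    have hVv : ∀ (n : ℕ) (h : n < m + 2), V n = v ⟨n, h⟩ := by
      intro n h
      simp only [hVdef]
      rw [dif_pos h]
    -- row 0
    have h0lt : (0 : ℕ) < m + 2 := by omega
    have h1lt : (1 : ℕ) < m + 2 := by omega
    have eq0 : lam * V 0 = dC * V 0 + aC * V 1 := by
      have hsum := sum_two_aux (fun j => M ⟨0, h0lt⟩ j * v j) ⟨0, h0lt⟩ ⟨1, h1lt⟩
        (by simp [Fin.ext_iff])
        (by
          intro j hj1 hj2
          have hj1' : (j : ℕ) ≠ 0 := fun h => hj1 (Fin.ext h)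
          have hj2' : (j : ℕ) ≠ 1 := fun h => hj2 (Fin.ext h)
          show M ⟨0, h0lt⟩ j * v j = 0
          rw [hMe]
          simp only [Fin.val_mk]
          rw [if_neg (by omega), if_neg (by omega), if_neg (by omega), zero_mul])
      beta_reduce at hsum
      rw [hrow ⟨0, h0lt⟩] at hsum
      have e00 : M ⟨0, h0lt⟩ ⟨0, h0lt⟩ = dC := by
        rw [hMe]
        simp only [Fin.val_mk]
        rw [if_neg (by omega : ¬((0:ℕ) = 0 + 1)), if_neg (by omega : ¬((0:ℕ) = 0 + 1)),
          if_pos trivial, if_neg (by omega)]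
      have e01 : M ⟨0, h0lt⟩ ⟨1, h1lt⟩ = aC := by
        rw [hMe]
        simp only [Fin.val_mk]
        rw [if_pos trivial]
      rw [e00, e01] at hsum
      rw [hVv 0 h0lt, hVv 1 h1lt]
      exact hsum
    -- middle rows
    have eqmid : ∀ k : ℕ, 0 < k → k + 1 < m + 2 →
        lam * V k = bC * V (k - 1) + dC * V k + aC * V (k + 1) := by
      intro k hk0 hk1
      have hk : k < m + 2 := by omega
      have hkm : k - 1 < m + 2 := by omega
      have hsum := sum_three_aux (fun j => M ⟨k, hk⟩ j * v j) ⟨k - 1, hkm⟩ ⟨k, hk⟩ ⟨k + 1, hk1⟩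
        (by simp only [ne_eq, Fin.mk.injEq]; omega)
        (by simp only [ne_eq, Fin.mk.injEq]; omega)
        (by simp only [ne_eq, Fin.mk.injEq]; omega)
        (by
          intro j hj1 hj2 hj3
          have hj1' : (j : ℕ) ≠ k - 1 := fun h => hj1 (Fin.ext h)
          have hj2' : (j : ℕ) ≠ k := fun h => hj2 (Fin.ext h)
          have hj3' : (j : ℕ) ≠ k + 1 := fun h => hj3 (Fin.ext h)
          show M ⟨k, hk⟩ j * v j = 0
          rw [hMe]
          simp only [Fin.val_mk]
          rw [if_neg (by omega), if_neg (by omega), if_neg (by omega), zero_mul])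
      beta_reduce at hsum
      rw [hrow ⟨k, hk⟩] at hsum
      have e1 : M ⟨k, hk⟩ ⟨k - 1, hkm⟩ = bC := by
        rw [hMe]
        simp only [Fin.val_mk]
        rw [if_neg (by omega : ¬(k - 1 = k + 1)), if_pos (by omega : k = k - 1 + 1)]
      have e2 : M ⟨k, hk⟩ ⟨k, hk⟩ = dC := by
        rw [hMe]
        simp only [Fin.val_mk]
        rw [if_neg (by omega : ¬(k = k + 1)), if_neg (by omega : ¬(k = k + 1)),
          if_pos trivial, if_neg (by omega)]
      have e3 : M ⟨k, hk⟩ ⟨k + 1, hk1⟩ = aC := by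
        rw [hMe]
        simp only [Fin.val_mk]
        rw [if_pos trivial]
      rw [e1, e2, e3] at hsum
      rw [hVv k hk, hVv (k - 1) hkm, hVv (k + 1) hk1]
      exact hsum
    -- last row
    have hmlt : m < m + 2 := by omega
    have hm1lt : m + 1 < m + 2 := by omega
    have eqlast : lam * V (m + 1) = bC * V m + (dC + rC) * V (m + 1) := by
      have hsum := sum_two_aux (fun j => M ⟨m + 1, hm1lt⟩ j * v j) ⟨m, hmlt⟩ ⟨m + 1, hm1lt⟩
        (by simp only [ne_eq, Fin.mk.injEq]; omega)
        (by
          intro j hj1 hj2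
          have hj1' : (j : ℕ) ≠ m := fun h => hj1 (Fin.ext h)
          have hj2' : (j : ℕ) ≠ m + 1 := fun h => hj2 (Fin.ext h)
          show M ⟨m + 1, hm1lt⟩ j * v j = 0
          rw [hMe]
          simp only [Fin.val_mk]
          have hjlt : (j : ℕ) < m + 2 := j.isLt
          rw [if_neg (by omega), if_neg (by omega), if_neg (by omega), zero_mul])
      beta_reduce at hsum
      rw [hrow ⟨m + 1, hm1lt⟩] at hsum
      have e1 : M ⟨m + 1, hm1lt⟩ ⟨m, hmlt⟩ = bC := by
        rw [hMe]
        simp only [Fin.val_mk]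
        rw [if_neg (by omega : ¬(m = m + 1 + 1)), if_pos trivial]
      have e2 : M ⟨m + 1, hm1lt⟩ ⟨m + 1, hm1lt⟩ = dC + rC := by
        rw [hMe]
        simp only [Fin.val_mk]
        rw [if_neg (by omega : ¬(m + 1 = m + 1 + 1)), if_neg (by omega : ¬(m + 1 = m + 1 + 1)),
          if_pos trivial, if_pos trivial]
      rw [e1, e2] at hsum
      rw [hVv (m + 1) hm1lt, hVv m hmlt]
      exact hsum
    -- the key recurrence solution
    have main : ∀ n, n < m + 2 →
        V n * (z - w) * aC ^ n = V 0 * s ^ n * (z ^ (n + 1) - w ^ (n + 1)) := by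
      intro n
      induction n using Nat.strong_induction_on with
      | _ n ih =>
        match n, ih with
        | 0, _ => intro _; ring
        | 1, _ =>
          intro _
          have ha : aC * V 1 = s * (z + w) * V 0 := by
            linear_combination V 0 * hμz - eq0
          linear_combination (z - w) * ha
        | (n + 2), ih =>
          intro hn2
          have e := eqmid (n + 1) (by omega) (by omega)
          simp only [Nat.add_sub_cancel] at e
          have ha : aC * V (n + 2) = s * (z + w) * V (n + 1) - bC * V n := by
            linear_combination V (n + 1) * hμz - e
          have h1 := ih (n + 1) (by omega) (by omega)
          have h0 := ih n (by omega) (by omega)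
          linear_combination ((z - w) * aC ^ (n + 1)) * ha + (s * (z + w)) * h1
            - (bC * aC) * h0
            + (V 0 * s ^ n * (z ^ (n + 1) - w ^ (n + 1)) * s ^ 2) * hw
            + (V 0 * s ^ n * (z ^ (n + 1) - w ^ (n + 1))) * hs2C
    have hV0 : V 0 ≠ 0 := by
      intro h0
      apply hvne
      funext i
      have hi := main (i : ℕ) i.isLt
      rw [h0] at hi
      simp only [zero_mul] at hi
      have hVi : V (i : ℕ) = 0 := by
        by_contra hne
        exact (mul_ne_zero (mul_ne_zero hne hzw_ne) (pow_ne_zero _ haC)) hi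
      have heq : V (i : ℕ) = v i := by rw [hVv (i : ℕ) i.isLt]
      show v i = 0
      rw [← heq]
      exact hVi
    have hfin : (s * (z + w) - rC) * V (m + 1) = bC * V m := by
      linear_combination eqlast - V (m + 1) * hμz
    have m1 := main (m + 1) (by omega)
    have m2 := main m (by omega)
    have hPs : V 0 * s ^ (m + 1) * s ≠ 0 :=
      mul_ne_zero (mul_ne_zero hV0 (pow_ne_zero _ hsne)) hsne
    have key2 : ((z + w - jC) * (z ^ (m + 2) - w ^ (m + 2))) * (V 0 * s ^ (m + 1) * s)
        = (z ^ (m + 1) - w ^ (m + 1)) * (V 0 * s ^ (m + 1) * s) := by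
      linear_combination ((z - w) * aC ^ (m + 1)) * hfin - (s * (z + w) - rC) * m1
        + (bC * aC) * m2
        - (V 0 * s ^ (m + 1) * (z ^ (m + 2) - w ^ (m + 2))) * hjs
        - (V 0 * s ^ m * (z ^ (m + 1) - w ^ (m + 1))) * hs2C
    have hE : (z + w - jC) * (z ^ (m + 2) - w ^ (m + 2)) = z ^ (m + 1) - w ^ (m + 1) :=
      mul_right_cancel₀ hPs key2
    have hw2 : z ^ (m + 2) * w ^ (m + 2) = 1 := by rw [← mul_pow, hw, one_pow]
    have hw3 : z ^ (m + 3) * w ^ (m + 3) = 1 := by rw [← mul_pow, hw, one_pow]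
    linear_combination (z ^ (m + 3)) * hE
      - (z ^ (2 * m + 4) - z ^ (m + 3) * w ^ (m + 1)) * hw + hw3 - (jC * z) * hw2
end

section
/- Let T ≥ 1 be an integer and let j be a real number with 0 < j ≤ 1. Then every complex root of the polynomial p(z) = z^{2T+2} − j·z^{2T+1} + j·z − 1 lies on the unit circle, i.e. every z ∈ ℂ with p(z) = 0 satisfies |z| = 1. -/
/-- Root localization: for `0 < j ≤ 1`, every complex root of
`p(z) = z^{2T+2} - j z^{2T+1} + j z - 1` lies on the unit circle. -/
theorem stmt8 (T : ℕ) (hT : 1 ≤ T) (j : ℝ) (hj0 : 0 < j) (hj1 : j ≤ 1)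
    (z : ℂ)
    (hz : z ^ (2 * T + 2) - (j : ℂ) * z ^ (2 * T + 1) + (j : ℂ) * z - 1 = 0) :
    ‖z‖ = 1 := by
  set a := ‖z‖ with ha
  have ha0 : 0 ≤ a := norm_nonneg z
  set A := ‖z - (j : ℂ)‖ with hA
  set B := ‖1 - (j : ℂ) * z‖ with hB
  have hA0 : 0 ≤ A := norm_nonneg _
  have hB0 : 0 ≤ B := norm_nonneg _
  have key : a ^ (2 * T + 1) * A = B := by
    rw [ha, hA, hB, ← norm_pow, ← norm_mul]
    congr 1
    have h2 : 2 * T + 2 = (2 * T + 1) + 1 := by ring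
    rw [h2, pow_succ] at hz
    linear_combination hz
  have hdiff : B ^ 2 - A ^ 2 = (1 - j ^ 2) * (1 - a ^ 2) := by
    rw [hA, hB, ha, Complex.sq_norm, Complex.sq_norm, Complex.sq_norm]
    simp [Complex.normSq_apply, Complex.mul_re, Complex.mul_im, Complex.sub_re,
      Complex.sub_im, Complex.one_re, Complex.one_im, Complex.ofReal_re, Complex.ofReal_im]
    ring
  by_contra hne
  rcases lt_or_gt_of_ne (fun h => hne h) with hlt | hgt
  · -- a < 1
    have hBpos : 0 < B := by
      rw [hB]
      have : (1 : ℂ) - (j : ℂ) * z ≠ 0 := by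
        intro h
        have h1 : ‖(j : ℂ) * z‖ = 1 := by
          have : (j : ℂ) * z = 1 := by linear_combination -h
          rw [this]; simp
        rw [norm_mul, Complex.norm_real, Real.norm_eq_abs, abs_of_pos hj0, ← ha] at h1
        nlinarith
      exact norm_pos_iff.mpr this
    have hAB : A ≤ B := by
      have h1 : (0:ℝ) ≤ 1 - j ^ 2 := by nlinarith
      have h2 : (0:ℝ) ≤ 1 - a ^ 2 := by nlinarith
      nlinarith [mul_nonneg h1 h2]
    have hpow : a ^ (2 * T + 1) < 1 := pow_lt_one₀ ha0 hlt (by omega)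
    nlinarith [mul_le_mul_of_nonneg_left hAB (pow_nonneg ha0 (2 * T + 1))]
  · -- a > 1
    have hApos : 0 < A := by
      rw [hA]
      have : z - (j : ℂ) ≠ 0 := by
        intro h
        have : z = (j : ℂ) := by linear_combination h
        rw [this, Complex.norm_real, Real.norm_eq_abs, abs_of_pos hj0] at ha
        nlinarith
      exact norm_pos_iff.mpr this
    have hBA : B ≤ A := by
      have h1 : (0:ℝ) ≤ 1 - j ^ 2 := by nlinarith
      have h2 : (0:ℝ) ≤ a ^ 2 - 1 := by nlinarith
      nlinarith [mul_nonneg h1 h2]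
    have hpow : 1 < a ^ (2 * T + 1) := one_lt_pow₀ hgt (by omega)
    nlinarith
end

section
/- There exists an integer T₀ such that for every integer T ≥ T₀ the following hold: (i) √(K̂β)·cos(π/(T+1)) + √((K̂·cos²(π/(T+1)) − K̄)·β) ≤ √(ρ(A_T)) ≤ √(K̂β) + √((K̂ − K̄)·β); and (ii) r ≤ √(ρ(A_T)·K̂·β). -/
set_option maxHeartbeats 1000000

open scoped Matrix ENNReal NNReal
attribute [local instance] Matrix.linftyOpNormedRing Matrix.linftyOpNormedAlgebra

lemma eigenvector_of_mem_spectrum {T : ℕ} {A : Matrix (Fin T) (Fin T) ℂ} {μ : ℂ}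
    (h : μ ∈ spectrum ℂ A) : ∃ v, v ≠ 0 ∧ A.mulVec v = μ • v := by
  rw [spectrum.mem_iff, Matrix.isUnit_iff_isUnit_det, isUnit_iff_ne_zero, not_not,
    ← Matrix.exists_mulVec_eq_zero_iff] at h
  obtain ⟨v, hv, hmv⟩ := h
  refine ⟨v, hv, ?_⟩
  rw [Matrix.sub_mulVec, Algebra.algebraMap_eq_smul_one, Matrix.smul_mulVec,
    Matrix.one_mulVec, sub_eq_zero] at hmv
  exact hmv.symm



lemma specRad_le_of_forall {T : ℕ} {A : Matrix (Fin T) (Fin T) ℝ} {lam : ℝ}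
    (hA : ∀ i j, 0 ≤ A i j) {x : Fin T → ℝ} (hx : ∀ i, 0 < x i) (hlam : 0 ≤ lam)
    (h : ∀ i, ∑ j, A i j * x j ≤ lam * x i) : specRad A ≤ lam := by
  apply Real.sSup_le _ hlam
  rintro y ⟨μ, hμ, rfl⟩
  obtain ⟨v, hv, hmv⟩ := eigenvector_of_mem_spectrum hμ
  have hne : ∃ k, v k ≠ 0 := by
    by_contra hc
    push_neg at hc
    exact hv (funext hc)
  obtain ⟨k, hk⟩ := hne
  have hTne : (Finset.univ : Finset (Fin T)).Nonempty := ⟨k, Finset.mem_univ k⟩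
  obtain ⟨i, -, hi⟩ := Finset.exists_max_image Finset.univ
    (fun j => ‖v j‖ / x j) hTne
  set m : ℝ := ‖v i‖ / x i with hm
  have hmpos : 0 < m := by
    have h1 : ‖v k‖ / x k ≤ m := hi k (Finset.mem_univ k)
    have h2 : 0 < ‖v k‖ / x k :=
      div_pos (by simpa using hk) (hx k)
    linarith
  have hvi : 0 < ‖v i‖ := by
    have := mul_pos hmpos (hx i)
    rwa [hm, div_mul_cancel₀] at this
    exact (hx i).ne'
  have hvj : ∀ j, ‖v j‖ ≤ m * x j := by
    intro j
    have := hi j (Finset.mem_univ j)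
    rw [div_le_iff₀ (hx j)] at this
    linarith [this]
  have key : ‖μ‖ * ‖v i‖ ≤ lam * ‖v i‖ := by
    have h1 : (A.map Complex.ofReal).mulVec v i = μ * v i := by
      rw [hmv]; rfl
    have h2 : ‖μ * v i‖ = ‖μ‖ * ‖v i‖ := norm_mul _ _
    calc ‖μ‖ * ‖v i‖ = ‖(A.map Complex.ofReal).mulVec v i‖ := by
          rw [h1, h2]
      _ = ‖∑ j, (A i j : ℂ) * v j‖ := by
          rw [Matrix.mulVec]; rfl
      _ ≤ ∑ j, ‖(A i j : ℂ) * v j‖ :=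
          norm_sum_le _ _
      _ = ∑ j, A i j * ‖v j‖ := by
          refine Finset.sum_congr rfl fun j _ => ?_
          rw [norm_mul, Complex.norm_real, Real.norm_eq_abs, abs_of_nonneg (hA i j)]
      _ ≤ ∑ j, A i j * (m * x j) := by
          refine Finset.sum_le_sum fun j _ => ?_
          exact mul_le_mul_of_nonneg_left (hvj j) (hA i j)
      _ = m * ∑ j, A i j * x j := by
          rw [Finset.mul_sum]; refine Finset.sum_congr rfl fun j _ => by ring
      _ ≤ m * (lam * x i) := by
          exact mul_le_mul_of_nonneg_left (h i) hmpos.le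
      _ = lam * (m * x i) := by ring
      _ = lam * ‖v i‖ := by
          rw [hm, div_mul_cancel₀ _ (hx i).ne']
  exact le_of_mul_le_mul_right key hvi


lemma pow_entry_nonneg {T : ℕ} {A : Matrix (Fin T) (Fin T) ℝ}
    (hA : ∀ i j, 0 ≤ A i j) : ∀ n i j, 0 ≤ (A ^ n) i j := by
  intro n
  induction n with
  | zero => intro i j; by_cases hij : i = j <;> simp [pow_zero, Matrix.one_apply, hij]
  | succ n ih =>
      intro i j
      rw [pow_succ, Matrix.mul_apply]
      exact Finset.sum_nonneg fun k _ => mul_nonneg (ih i k) (hA k j)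

lemma pow_vec_ge {T : ℕ} {A : Matrix (Fin T) (Fin T) ℝ} {lam : ℝ}
    (hA : ∀ i j, 0 ≤ A i j) {x : Fin T → ℝ} (hx : ∀ i, 0 < x i) (hlam : 0 ≤ lam)
    (h : ∀ i, lam * x i ≤ ∑ j, A i j * x j) :
    ∀ n i, lam ^ n * x i ≤ ∑ j, (A ^ n) i j * x j := by
  intro n
  induction n with
  | zero =>
      intro i
      simp [pow_zero, Matrix.one_apply]
  | succ n ih =>
      intro i
      have hpow := pow_entry_nonneg hA
      calc lam ^ (n+1) * x i = lam ^ n * (lam * x i) := by ring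
        _ ≤ lam ^ n * ∑ j, A i j * x j :=
            mul_le_mul_of_nonneg_left (h i) (pow_nonneg hlam n)
        _ = ∑ j, A i j * (lam ^ n * x j) := by
            rw [Finset.mul_sum]; exact Finset.sum_congr rfl fun j _ => by ring
        _ ≤ ∑ j, A i j * ∑ k, (A ^ n) j k * x k :=
            Finset.sum_le_sum fun j _ => mul_le_mul_of_nonneg_left (ih j) (hA i j)
        _ = ∑ k, (∑ j, A i j * (A ^ n) j k) * x k := by
            simp_rw [Finset.mul_sum]
            rw [Finset.sum_comm]
            exact Finset.sum_congr rfl fun k _ => by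
              rw [Finset.sum_mul]; exact Finset.sum_congr rfl fun j _ => by ring
        _ = ∑ k, (A ^ (n+1)) i k * x k := by
            refine Finset.sum_congr rfl fun k _ => ?_
            rw [pow_succ', Matrix.mul_apply]

lemma le_specRad_of_forall {T : ℕ} (hT : 0 < T) {A : Matrix (Fin T) (Fin T) ℝ} {lam : ℝ}
    (hA : ∀ i j, 0 ≤ A i j) {x : Fin T → ℝ} (hx : ∀ i, 0 < x i) (hlam : 0 ≤ lam)
    (h : ∀ i, lam * x i ≤ ∑ j, A i j * x j) : lam ≤ specRad A := by
  classical
  haveI : NeZero T := ⟨hT.ne'⟩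
  set M : Matrix (Fin T) (Fin T) ℂ := A.map Complex.ofReal with hM
  set i0 : Fin T := ⟨0, hT⟩
  -- max and min of x
  obtain ⟨imax, -, himax⟩ := Finset.exists_max_image Finset.univ x ⟨i0, Finset.mem_univ i0⟩
  set c : ℝ := x i0 / x imax with hc
  have hcpos : 0 < c := div_pos (hx i0) (hx imax)
  -- norm lower bound
  have hMpow : ∀ n : ℕ, M ^ n = (A ^ n).map Complex.ofReal := by
    intro n
    rw [show M = Complex.ofRealHom.mapMatrix A from rfl, ← map_pow]
    rfl
  have hnorm : ∀ n : ℕ, lam ^ n * c ≤ ‖M ^ n‖ := by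
    intro n
    have h1 : lam ^ n * x i0 ≤ ∑ j, (A ^ n) i0 j * x j := pow_vec_ge hA hx hlam h n i0
    have h2 : ∑ j, (A ^ n) i0 j * x j ≤ (∑ j, (A ^ n) i0 j) * x imax := by
      rw [Finset.sum_mul]
      exact Finset.sum_le_sum fun j _ =>
        mul_le_mul_of_nonneg_left (himax j (Finset.mem_univ j)) (pow_entry_nonneg hA n i0 j)
    have h3 : (‖(M ^ n)‖₊ : ℝ) = _ := congrArg _ (Matrix.linfty_opNNNorm_def (M ^ n))
    have h4 : (∑ j, ‖(M ^ n) i0 j‖₊ : ℝ≥0) ≤ ‖M ^ n‖₊ := by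
      rw [Matrix.linfty_opNNNorm_def]
      exact Finset.le_sup (f := fun i => ∑ j, ‖(M ^ n) i j‖₊) (Finset.mem_univ i0)
    have h5 : ((∑ j, ‖(M ^ n) i0 j‖₊ : ℝ≥0) : ℝ) = ∑ j, (A ^ n) i0 j := by
      push_cast
      refine Finset.sum_congr rfl fun j _ => ?_
      rw [hMpow n]
      simp only [Matrix.map_apply, coe_nnnorm, Complex.norm_real, Real.norm_eq_abs]
      exact abs_of_nonneg (pow_entry_nonneg hA n i0 j)
    have h6 : ∑ j, (A ^ n) i0 j ≤ ‖M ^ n‖ := by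
      rw [← h5]
      exact_mod_cast h4
    have h7 : lam ^ n * c ≤ ∑ j, (A ^ n) i0 j := by
      rw [hc]
      rw [mul_div_assoc' , div_le_iff₀ (hx imax)]
      calc lam ^ n * x i0 ≤ ∑ j, (A ^ n) i0 j * x j := h1
        _ ≤ (∑ j, (A ^ n) i0 j) * x imax := h2
    linarith
  -- Gelfand
  have hgelfand := spectrum.pow_nnnorm_pow_one_div_tendsto_nhds_spectralRadius M
  have hlow : ∀ n : ℕ, ENNReal.ofReal ((lam ^ n * c) ^ (1 / (n:ℝ))) ≤
      (‖M ^ n‖₊ : ℝ≥0∞) ^ (1 / (n:ℝ)) := by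
    intro n
    have h1 : ENNReal.ofReal ((lam ^ n * c) ^ (1 / (n:ℝ)))
        = (ENNReal.ofReal (lam ^ n * c)) ^ (1 / (n:ℝ)) :=
      (ENNReal.ofReal_rpow_of_nonneg (by positivity) (by positivity)).symm
    rw [h1]
    have h2 : ENNReal.ofReal (lam ^ n * c) ≤ (‖M ^ n‖₊ : ℝ≥0∞) := by
      rw [show ((‖M ^ n‖₊ : ℝ≥0∞)) = ENNReal.ofReal ‖M ^ n‖ from (ofReal_norm _).symm]
      exact ENNReal.ofReal_le_ofReal (hnorm n)
    exact ENNReal.rpow_le_rpow h2 (by positivity)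
  -- limit of lower sequence is ofReal lam
  have hltend : Filter.Tendsto (fun n : ℕ => ENNReal.ofReal ((lam ^ n * c) ^ (1 / (n:ℝ))))
      Filter.atTop (nhds (ENNReal.ofReal lam)) := by
    apply Filter.Tendsto.comp (ENNReal.continuous_ofReal.tendsto lam)
    have heq : ∀ᶠ n : ℕ in Filter.atTop,
        (lam ^ n * c) ^ (1 / (n:ℝ)) = lam * c ^ (1 / (n:ℝ)) := by
      filter_upwards [Filter.eventually_ge_atTop 1] with n hn
      rw [Real.mul_rpow (by positivity) hcpos.le, ← Real.rpow_natCast lam n,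
        ← Real.rpow_mul hlam]
      congr 1
      rw [mul_one_div, div_self (by exact_mod_cast Nat.one_le_iff_ne_zero.mp hn)]
      exact Real.rpow_one lam
    rw [Filter.tendsto_congr' heq]
    have : Filter.Tendsto (fun n : ℕ => c ^ (1 / (n:ℝ))) Filter.atTop (nhds 1) := by
      have h0 : Filter.Tendsto (fun n : ℕ => 1 / (n:ℝ)) Filter.atTop (nhds 0) :=
        tendsto_one_div_atTop_nhds_zero_nat
      have hcont : ContinuousAt (fun y : ℝ => c ^ y) 0 :=
        Real.continuousAt_const_rpow hcpos.ne'
      have := hcont.tendsto.comp h0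
      simpa [Function.comp_def] using this
    have := this.const_mul lam
    simpa using this
  have hkey : ENNReal.ofReal lam ≤ spectralRadius ℂ M :=
    le_of_tendsto_of_tendsto' hltend hgelfand hlow
  -- from spectralRadius to specRad
  haveI : Nontrivial (Matrix (Fin T) (Fin T) ℂ) := by
    refine ⟨0, 1, fun hcon => ?_⟩
    have := congrFun (congrFun hcon i0) i0
    simp [Matrix.one_apply] at this
  obtain ⟨μ0, hμ0⟩ := spectrum.nonempty M
  set S := {y : ℝ | ∃ μ : ℂ, μ ∈ spectrum ℂ M ∧ y = ‖μ‖} with hS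
  have hSbdd : BddAbove S := by
    refine ⟨‖M‖, ?_⟩
    rintro y ⟨μ, hμ, rfl⟩
    exact spectrum.norm_le_norm_of_mem hμ
  have hSne : S.Nonempty := ⟨‖μ0‖, μ0, hμ0, rfl⟩
  have hsup_nonneg : 0 ≤ sSup S := le_csSup hSbdd hSne.choose_spec |>.trans' (by
    obtain ⟨μ, hμ, hy⟩ := hSne.choose_spec
    rw [hy]; positivity)
  have hrad_le : spectralRadius ℂ M ≤ ENNReal.ofReal (sSup S) := by
    rw [spectralRadius]
    refine iSup₂_le fun μ hμ => ?_
    rw [show ((‖μ‖₊ : ℝ≥0∞)) = ENNReal.ofReal ‖μ‖ from (ofReal_norm _).symm]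
    apply ENNReal.ofReal_le_ofReal
    exact le_csSup hSbdd ⟨μ, hμ, rfl⟩
  have : ENNReal.ofReal lam ≤ ENNReal.ofReal (sSup S) := hkey.trans hrad_le
  rw [ENNReal.ofReal_le_ofReal_iff hsup_nonneg] at this
  exact this


lemma stmt9_sum_indicator (n i : ℕ) (g : ℕ → ℝ) (hi : i ≤ n) :
    ∑ j ∈ Finset.range n, (if j + 1 = i then g j else 0)
      = if i = 0 then 0 else g (i - 1) := by
  cases i with
  | zero => simp
  | succ m =>
      rw [if_neg (Nat.succ_ne_zero m)]
      rw [Finset.sum_eq_single_of_mem m (Finset.mem_range.mpr (by omega))]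
      · simp
      · intro j _ hne
        rw [if_neg (by omega)]

lemma stmt9_sum_band (n i : ℕ) (g : ℕ → ℝ) (hi : i ≤ n) :
    ∑ j ∈ Finset.range n, (if i ≤ j then g j else 0) = ∑ j ∈ Finset.Ico i n, g j := by
  have h1 : ∑ j ∈ Finset.Ico 0 i, (if i ≤ j then g j else 0) = 0 :=
    Finset.sum_eq_zero fun j hj => if_neg (by have := (Finset.mem_Ico.mp hj).2; omega)
  have h2 : ∑ j ∈ Finset.Ico i n, (if i ≤ j then g j else 0) = ∑ j ∈ Finset.Ico i n, g j :=
    Finset.sum_congr rfl fun j hj => if_pos (Finset.mem_Ico.mp hj).1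
  rw [Finset.range_eq_Ico, ← Finset.sum_Ico_consecutive _ (Nat.zero_le i) hi, h1, h2, zero_add]

lemma stmt9_geom (m : ℕ) {q : ℝ} (h0 : 0 ≤ q) (h1 : q < 1) :
    ∑ k ∈ Finset.range m, q ^ k ≤ 1 / (1 - q) := by
  rw [geom_sum_eq h1.ne]
  have h2 : 0 < 1 - q := by linarith
  have h3 : (q ^ m - 1) / (q - 1) = (1 - q ^ m) / (1 - q) := by
    rw [div_eq_div_iff (by linarith : q - 1 ≠ 0) h2.ne']; ring
  rw [h3, div_le_div_iff₀ h2 h2]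
  nlinarith [pow_nonneg h0 m]

lemma stmt9_rec (β lam kh c t θ E : ℝ) (hE1 : β * lam * t = E) (hE2 : kh = E * t)
    (hE3 : lam + β * kh - c * β = 2 * Real.cos θ * E) (n : ℕ) :
    β * lam * (t ^ (n + 2) * Real.sin (((n : ℝ) + 2) * θ))
      = (lam + β * kh - c * β) * (t ^ (n + 1) * Real.sin (((n : ℝ) + 1) * θ))
        - kh * (t ^ n * Real.sin ((n : ℝ) * θ)) := by
  have hs : Real.sin (((n : ℝ) + 2) * θ) + Real.sin ((n : ℝ) * θ)
      = 2 * Real.sin (((n : ℝ) + 1) * θ) * Real.cos θ := by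
    have h1 : ((n : ℝ) + 2) * θ = ((n : ℝ) + 1) * θ + θ := by ring
    have h2 : (n : ℝ) * θ = ((n : ℝ) + 1) * θ - θ := by ring
    rw [h1, h2, Real.sin_add, Real.sin_sub]; ring
  rw [hE3, hE2, ← hE1]
  linear_combination (β * lam * t ^ (n + 2)) * hs

lemma stmt9_band_id (T : ℕ) (β lam kh c : ℝ) (y : ℕ → ℝ)
    (hrec : ∀ n : ℕ, β * lam * y (n + 2) = (lam + β * kh - c * β) * y (n + 1) - kh * y n)
    (hyT1 : y (T + 1) = 0) :
    ∀ m i, i < T → T - 1 - i = m →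
      c * ∑ j ∈ Finset.Ico i (T - 1), β ^ (j - i + 1) * y (j + 1)
        = lam * y (i + 1) - kh * y i + β ^ (T - i) * ((kh - c) * y T) := by
  intro m
  induction m with
  | zero =>
      intro i hiT him
      have hi : i = T - 1 := by omega
      subst hi
      rw [Finset.Ico_self, Finset.sum_empty, mul_zero]
      have h := hrec (T - 1)
      have e1 : T - 1 + 1 = T := by omega
      have e2 : T - 1 + 2 = T + 1 := by omega
      rw [e1, e2, hyT1, mul_zero] at h
      have e3 : T - (T - 1) = 1 := by omega
      rw [e1, e3, pow_one]
      linarith [h]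
  | succ m ih =>
      intro i hiT him
      have hi1 : i + 1 < T := by omega
      have hIH := ih (i + 1) hi1 (by omega)
      have hsplit : ∑ j ∈ Finset.Ico i (T - 1), β ^ (j - i + 1) * y (j + 1)
          = β * y (i + 1) + β * ∑ j ∈ Finset.Ico (i + 1) (T - 1), β ^ (j - (i + 1) + 1) * y (j + 1) := by
        rw [Finset.sum_eq_sum_Ico_succ_bot (by omega : i < T - 1)]
        have e0 : i - i + 1 = 1 := by omega
        rw [e0, pow_one, Finset.mul_sum]
        congr 1
        refine Finset.sum_congr rfl fun j hj => ?_
        have hji : i + 1 ≤ j := (Finset.mem_Ico.mp hj).1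
        have e1 : j - i + 1 = (j - (i + 1) + 1) + 1 := by omega
        rw [e1, pow_succ]
        ring
      have hpow : β ^ (T - i) = β * β ^ (T - (i + 1)) := by
        rw [← pow_succ']
        congr 1
        omega
      rw [hsplit, hpow]
      have hr := hrec i
      linear_combination β * hIH + hr

section
variable {L1 K1 rho β : ℝ}

lemma stmt9_facts (hL1 : 0 < L1) (hK1 : 0 < K1) (hrho : 0 < rho)
    (hβ0 : 0 < β) (hβ1 : β < 1) (hβK : β * K1 < 2) :
    0 < Lbar L1 K1 β ∧ 0 < Kbar L1 K1 rho β ∧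
      Khat L1 K1 rho β - Kbar L1 K1 rho β = Lbar L1 K1 β * K1 / rho ∧
      0 < Khat L1 K1 rho β - Kbar L1 K1 rho β ∧ L1 ≤ Lbar L1 K1 β := by
  have hd0 : 0 < 1 - β * K1 / 2 := by nlinarith
  have hLb : 0 < Lbar L1 K1 β := div_pos hL1 hd0
  have hid : Khat L1 K1 rho β - Kbar L1 K1 rho β = Lbar L1 K1 β * K1 / rho := by
    rw [Khat]; ring
  refine ⟨hLb, ?_, hid, by rw [hid]; positivity, ?_⟩
  · rw [Kbar]
    have h1 : 0 < 2 * rho * (1 - β) := by nlinarith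
    positivity
  · rw [Lbar, le_div_iff₀ hd0]
    nlinarith [mul_pos hL1 (mul_pos hβ0 hK1)]

lemma stmt9_AT_nonneg (hL1 : 0 < L1) (hK1 : 0 < K1) (hrho : 0 < rho)
    (hβ0 : 0 < β) (hβ1 : β < 1) (hβK : β * K1 < 2) (T : ℕ) :
    ∀ i j, 0 ≤ AT L1 K1 rho β T i j := by
  obtain ⟨hLb, hkb, -, -, -⟩ := stmt9_facts hL1 hK1 hrho hβ0 hβ1 hβK
  intro i j
  simp only [AT]
  split_ifs
  · positivity
  · positivity
  · positivity
  · exact le_refl 0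

lemma stmt9_upper (hL1 : 0 < L1) (hK1 : 0 < K1) (hrho : 0 < rho)
    (hβ0 : 0 < β) (hβ1 : β < 1) (hβK : β * K1 < 2) (T : ℕ) :
    specRad (AT L1 K1 rho β T)
      ≤ (Real.sqrt (Khat L1 K1 rho β * β)
          + Real.sqrt ((Khat L1 K1 rho β - Kbar L1 K1 rho β) * β)) ^ 2 := by
  obtain ⟨hLb, hkb0, hcL, hc0, hL1L⟩ := stmt9_facts hL1 hK1 hrho hβ0 hβ1 hβK
  set kb := Kbar L1 K1 rho β with hkb
  set kh := Khat L1 K1 rho β with hkh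
  set c := kh - kb with hc
  have hkh0 : 0 < kh := by linarith
  set a := Real.sqrt (kh * β) with ha
  set b := Real.sqrt (c * β) with hb
  have ha2 : a ^ 2 = kh * β := Real.sq_sqrt (by positivity)
  have hb2 : b ^ 2 = c * β := Real.sq_sqrt (by positivity)
  have ha0 : 0 < a := Real.sqrt_pos.mpr (by positivity)
  have hb0 : 0 < b := Real.sqrt_pos.mpr (by positivity)
  set s := a / (β * (a + b)) with hs
  have hs0 : 0 < s := by positivity
  have hβs : β * s = a / (a + b) := by
    rw [hs]; field_simp
  have hβs1 : β * s < 1 := by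
    rw [hβs, div_lt_one (by positivity)]; linarith
  have h1s : 1 - β * s = b / (a + b) := by
    rw [hβs]; field_simp; ring
  have hval : kh / s + c * β * ((a + b) / b) = (a + b) ^ 2 := by
    have e1 : kh / s = a * (a + b) := by
      rw [hs, div_div_eq_mul_div, div_eq_iff ha0.ne']
      linear_combination (-(a + b)) * ha2
    have e2 : c * β * ((a + b) / b) = b * (a + b) := by
      rw [mul_div_assoc', div_eq_iff hb0.ne']
      linear_combination (-(a + b)) * hb2
    rw [e1, e2]; ring
  have hcpc : L1 * K1 / rho ≤ c := by
    rw [hcL]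
    gcongr
  have hrow : ∀ i : Fin T, ∑ j, AT L1 K1 rho β T i j * s ^ (j : ℕ)
      ≤ (a + b) ^ 2 * s ^ (i : ℕ) := by
    intro i
    have hiT : (i : ℕ) < T := i.isLt
    have hstep1 : ∀ j : Fin T, AT L1 K1 rho β T i j * s ^ (j : ℕ)
        ≤ (if (j : ℕ) + 1 = (i : ℕ) then kh * s ^ (j : ℕ) else 0)
          + (if (i : ℕ) ≤ (j : ℕ) then c * β ^ ((j : ℕ) - (i : ℕ) + 1) * s ^ (j : ℕ) else 0) := by
      intro j
      simp only [AT]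
      by_cases h1 : (j : ℕ) + 1 = T
      · have hij : (i : ℕ) ≤ (j : ℕ) := by omega
        have hji : ¬((j : ℕ) + 1 = (i : ℕ)) := by omega
        rw [if_pos h1, if_neg hji, if_pos hij]
        have hTi : T - (i : ℕ) = (j : ℕ) - (i : ℕ) + 1 := by omega
        rw [hTi, zero_add]
        exact mul_le_mul_of_nonneg_right
          (mul_le_mul_of_nonneg_right hcpc (pow_nonneg hβ0.le _)) (pow_nonneg hs0.le _)
      · rw [if_neg h1]
        by_cases h2 : (j : ℕ) + 1 = (i : ℕ)
        · have hij : ¬((i : ℕ) ≤ (j : ℕ)) := by omega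
          rw [if_pos h2, if_pos h2, if_neg hij, add_zero]
          have : Kbar L1 K1 rho β + Lbar L1 K1 β * K1 / rho = kh := by
            rw [hkh, Khat]; ring
          rw [this]
        · rw [if_neg h2, if_neg h2]
          by_cases h3 : (i : ℕ) ≤ (j : ℕ)
          · rw [if_pos h3, if_pos h3, zero_add]
            rw [← hcL]
          · rw [if_neg h3, if_neg h3, add_zero, zero_mul]
    have hsum2 : ∑ j ∈ Finset.range T, (if j + 1 = (i : ℕ) then kh * s ^ j else 0)
        ≤ kh / s * s ^ (i : ℕ) := by
      rw [stmt9_sum_indicator T (i : ℕ) _ hiT.le]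
      by_cases h0 : (i : ℕ) = 0
      · rw [if_pos h0]; positivity
      · rw [if_neg h0]
        have he : s ^ (i : ℕ) = s ^ ((i : ℕ) - 1) * s := by
          rw [← pow_succ]; congr 1; omega
        have hsne : s ≠ 0 := hs0.ne'
        rw [he]
        apply le_of_eq
        field_simp
    have hsum3 : ∑ j ∈ Finset.range T, (if (i : ℕ) ≤ j then c * β ^ (j - (i : ℕ) + 1) * s ^ j else 0)
        ≤ c * β * ((a + b) / b) * s ^ (i : ℕ) := by
      rw [stmt9_sum_band T (i : ℕ) _ hiT.le, Finset.sum_Ico_eq_sum_range]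
      have hterm : ∀ k, c * β ^ ((i : ℕ) + k - (i : ℕ) + 1) * s ^ ((i : ℕ) + k)
          = (c * β * s ^ (i : ℕ)) * (β * s) ^ k := by
        intro k
        have e1 : (i : ℕ) + k - (i : ℕ) + 1 = k + 1 := by omega
        rw [e1, pow_add, pow_succ, mul_pow]
        ring
      rw [Finset.sum_congr rfl fun k _ => hterm k, ← Finset.mul_sum]
      have hgeo := stmt9_geom (T - (i : ℕ)) (by positivity : (0:ℝ) ≤ β * s) hβs1
      have h1 : (0:ℝ) < c * β * s ^ (i : ℕ) := by positivity
      calc (c * β * s ^ (i : ℕ)) * ∑ k ∈ Finset.range (T - (i : ℕ)), (β * s) ^ k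
          ≤ (c * β * s ^ (i : ℕ)) * (1 / (1 - β * s)) :=
            mul_le_mul_of_nonneg_left hgeo h1.le
        _ = c * β * ((a + b) / b) * s ^ (i : ℕ) := by
            rw [h1s, one_div_div]; ring
    calc ∑ j, AT L1 K1 rho β T i j * s ^ (j : ℕ)
        ≤ ∑ j : Fin T, ((if (j : ℕ) + 1 = (i : ℕ) then kh * s ^ (j : ℕ) else 0)
            + (if (i : ℕ) ≤ (j : ℕ) then c * β ^ ((j : ℕ) - (i : ℕ) + 1) * s ^ (j : ℕ) else 0)) :=
          Finset.sum_le_sum fun j _ => hstep1 j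
      _ = ∑ j ∈ Finset.range T, ((if j + 1 = (i : ℕ) then kh * s ^ j else 0)
            + (if (i : ℕ) ≤ j then c * β ^ (j - (i : ℕ) + 1) * s ^ j else 0)) :=
          Fin.sum_univ_eq_sum_range (fun j => (if j + 1 = (i : ℕ) then kh * s ^ j else 0)
            + (if (i : ℕ) ≤ j then c * β ^ (j - (i : ℕ) + 1) * s ^ j else 0)) T
      _ = (∑ j ∈ Finset.range T, (if j + 1 = (i : ℕ) then kh * s ^ j else 0))
            + ∑ j ∈ Finset.range T, (if (i : ℕ) ≤ j then c * β ^ (j - (i : ℕ) + 1) * s ^ j else 0) :=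
          Finset.sum_add_distrib
      _ ≤ kh / s * s ^ (i : ℕ) + c * β * ((a + b) / b) * s ^ (i : ℕ) := add_le_add hsum2 hsum3
      _ = (kh / s + c * β * ((a + b) / b)) * s ^ (i : ℕ) := by ring
      _ = (a + b) ^ 2 * s ^ (i : ℕ) := by rw [hval]
  exact specRad_le_of_forall (stmt9_AT_nonneg hL1 hK1 hrho hβ0 hβ1 hβK T)
    (fun i => pow_pos hs0 (i : ℕ)) (by positivity) hrow
end

section
variable {L1 K1 rho β : ℝ}

lemma stmt9_lower (hL1 : 0 < L1) (hK1 : 0 < K1) (hrho : 0 < rho)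
    (hβ0 : 0 < β) (hβ1 : β < 1) (hβK : β * K1 < 2) (T : ℕ) (hT : 1 ≤ T)
    (hcos : 1 - (Khat L1 K1 rho β - Kbar L1 K1 rho β) / (2 * Khat L1 K1 rho β)
      ≤ Real.cos (Real.pi / ((T : ℝ) + 1)) ^ 2) :
    (Real.sqrt (Khat L1 K1 rho β * β) * Real.cos (Real.pi / ((T : ℝ) + 1))
        + Real.sqrt ((Khat L1 K1 rho β * Real.cos (Real.pi / ((T : ℝ) + 1)) ^ 2
            - Kbar L1 K1 rho β) * β)) ^ 2
      ≤ specRad (AT L1 K1 rho β T) ∧ Khat L1 K1 rho β * β ≤ specRad (AT L1 K1 rho β T) := by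
  obtain ⟨hLb, hkb0, hcL, hc0, hL1L⟩ := stmt9_facts hL1 hK1 hrho hβ0 hβ1 hβK
  set kb := Kbar L1 K1 rho β with hkb
  set kh := Khat L1 K1 rho β with hkh
  set c := kh - kb with hc
  have hkh0 : 0 < kh := by linarith
  set θ := Real.pi / ((T : ℝ) + 1) with hθ
  set co := Real.cos θ with hco
  have hθ0 : 0 < θ := by
    rw [hθ]; positivity
  have hθπ2 : θ ≤ Real.pi / 2 := by
    rw [hθ]
    apply div_le_div_of_nonneg_left Real.pi_pos.le (by norm_num)
    have : (1 : ℝ) ≤ (T : ℝ) := by exact_mod_cast hT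
    linarith
  have hconn : 0 ≤ co := Real.cos_nonneg_of_mem_Icc ⟨by linarith [Real.pi_pos], hθπ2⟩
  have hco2 : (kh + kb) / (2 * kh) ≤ co ^ 2 := by
    have he : 1 - c / (2 * kh) = (kh + kb) / (2 * kh) := by
      rw [hc]; field_simp; ring
    rw [← he]; exact hcos
  have h2khco : kh + kb ≤ 2 * kh * co ^ 2 := by
    rw [div_le_iff₀ (by positivity)] at hco2; linarith
  have hco0 : 0 < co := by
    rcases hconn.lt_or_eq with h | h
    · exact h
    · exfalso
      rw [← h] at h2khco
      simp at h2khco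
      linarith
  set q := kh * co ^ 2 - kb with hq
  have hq2 : c / 2 ≤ q := by rw [hq, hc]; linarith
  have hq0 : 0 < q := lt_of_lt_of_le (by positivity) hq2
  set a := Real.sqrt (kh * β) with ha
  have ha2 : a ^ 2 = kh * β := Real.sq_sqrt (by positivity)
  have ha0 : 0 < a := Real.sqrt_pos.mpr (by positivity)
  set d := Real.sqrt (q * β) with hd
  have hd2 : d ^ 2 = q * β := Real.sq_sqrt (by positivity)
  have hd0 : 0 < d := Real.sqrt_pos.mpr (by positivity)
  set lam := (a * co + d) ^ 2 with hlam
  have hacd : 0 < a * co + d := by positivity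
  have hlam0 : 0 < lam := by positivity
  set E := a * (a * co + d) with hE
  set t := a / (β * (a * co + d)) with ht
  have ht0 : 0 < t := by positivity
  have hE1 : β * lam * t = E := by
    rw [ht, hlam, hE]; field_simp
  have hE2 : kh = E * t := by
    rw [ht, hE]
    field_simp
    linear_combination (-1 : ℝ) * ha2
  rw [hq] at hd2
  have hE3 : lam + β * kh - c * β = 2 * co * E := by
    rw [hlam, hE, hc]
    linear_combination hd2 - co ^ 2 * ha2
  set y : ℕ → ℝ := fun n => t ^ n * Real.sin ((n : ℝ) * θ) with hy
  have hrecy : ∀ n : ℕ, β * lam * y (n + 2) = (lam + β * kh - c * β) * y (n + 1) - kh * y n := by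
    intro n
    simp only [hy]
    push_cast
    exact stmt9_rec β lam kh c t θ E hE1 hE2 hE3 n
  have hyT1 : y (T + 1) = 0 := by
    simp only [hy]
    have hTne : ((T : ℝ) + 1) ≠ 0 := by positivity
    have : ((T + 1 : ℕ) : ℝ) * θ = Real.pi := by
      push_cast
      rw [hθ, mul_comm, div_mul_cancel₀ _ hTne]
    rw [this, Real.sin_pi, mul_zero]
  have hypos : ∀ n : ℕ, 1 ≤ n → n ≤ T → 0 < y n := by
    intro n h1 h2
    simp only [hy]
    apply mul_pos (pow_pos ht0 n)
    apply Real.sin_pos_of_pos_of_lt_pi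
    · have hn0 : (0 : ℝ) < (n : ℝ) := by exact_mod_cast Nat.lt_of_lt_of_le Nat.zero_lt_one h1
      exact mul_pos hn0 hθ0
    · have hn : (n : ℝ) ≤ (T : ℝ) := by exact_mod_cast h2
      have h3 : (n:ℝ) * (Real.pi / ((T:ℝ)+1)) < Real.pi := by
        rw [← mul_div_assoc, div_lt_iff₀ (by positivity : (0:ℝ) < (T:ℝ)+1)]
        have h5 : (n:ℝ) * Real.pi ≤ (T : ℝ) * Real.pi :=
          mul_le_mul_of_nonneg_right hn Real.pi_pos.le
        have h6 : Real.pi * ((T : ℝ) + 1) = (T : ℝ) * Real.pi + Real.pi := by ring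
        rw [h6]
        linarith [Real.pi_pos]
      exact h3
  have hband := stmt9_band_id T β lam kh c y hrecy hyT1
  -- row inequality
  have hrow : ∀ i : Fin T, lam * y ((i : ℕ) + 1) ≤ ∑ j, AT L1 K1 rho β T i j * y ((j : ℕ) + 1) := by
    intro i
    have hiT : (i : ℕ) < T := i.isLt
    have hentry : ∀ j : Fin T, AT L1 K1 rho β T i j * y ((j : ℕ) + 1)
        = (if (j : ℕ) + 1 = T then (L1 * K1 / rho) * β ^ (T - (i : ℕ)) * y ((j : ℕ) + 1)
            else (if (j : ℕ) + 1 = (i : ℕ) then kh * y ((j : ℕ) + 1) else 0)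
              + (if (i : ℕ) ≤ (j : ℕ) then c * β ^ ((j : ℕ) - (i : ℕ) + 1) * y ((j : ℕ) + 1) else 0)) := by
      intro j
      simp only [AT]
      by_cases h1 : (j : ℕ) + 1 = T
      · rw [if_pos h1, if_pos h1]
      · rw [if_neg h1, if_neg h1]
        by_cases h2 : (j : ℕ) + 1 = (i : ℕ)
        · rw [if_pos h2, if_pos h2, if_neg (by omega : ¬((i : ℕ) ≤ (j : ℕ))), add_zero]
          have : Kbar L1 K1 rho β + Lbar L1 K1 β * K1 / rho = kh := by
            rw [hkh, Khat]; ring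
          rw [this]
        · rw [if_neg h2, if_neg h2]
          by_cases h3 : (i : ℕ) ≤ (j : ℕ)
          · rw [if_pos h3, if_pos h3, zero_add, ← hcL]
          · rw [if_neg h3, if_neg h3, add_zero, zero_mul]
    have hsum : ∑ j, AT L1 K1 rho β T i j * y ((j : ℕ) + 1)
        = ∑ j ∈ Finset.range T, (if j + 1 = T then (L1 * K1 / rho) * β ^ (T - (i : ℕ)) * y (j + 1)
            else (if j + 1 = (i : ℕ) then kh * y (j + 1) else 0)
              + (if (i : ℕ) ≤ j then c * β ^ (j - (i : ℕ) + 1) * y (j + 1) else 0)) := by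
      rw [Finset.sum_congr rfl fun j _ => hentry j]
      exact Fin.sum_univ_eq_sum_range (fun j => if j + 1 = T then (L1 * K1 / rho) * β ^ (T - (i : ℕ)) * y (j + 1)
            else (if j + 1 = (i : ℕ) then kh * y (j + 1) else 0)
              + (if (i : ℕ) ≤ j then c * β ^ (j - (i : ℕ) + 1) * y (j + 1) else 0)) T
    have hsplitT : ∑ j ∈ Finset.range T, (if j + 1 = T then (L1 * K1 / rho) * β ^ (T - (i : ℕ)) * y (j + 1)
            else (if j + 1 = (i : ℕ) then kh * y (j + 1) else 0)
              + (if (i : ℕ) ≤ j then c * β ^ (j - (i : ℕ) + 1) * y (j + 1) else 0))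
        = (∑ j ∈ Finset.range (T - 1), ((if j + 1 = (i : ℕ) then kh * y (j + 1) else 0)
              + (if (i : ℕ) ≤ j then c * β ^ (j - (i : ℕ) + 1) * y (j + 1) else 0)))
          + (L1 * K1 / rho) * β ^ (T - (i : ℕ)) * y T := by
      have hT' : T = (T - 1) + 1 := by omega
      rw [show (Finset.range T) = Finset.range ((T - 1) + 1) from by rw [← hT']]
      rw [Finset.sum_range_succ]
      congr 1
      · refine Finset.sum_congr rfl fun j hj => ?_
        have hjT : j + 1 ≠ T := by have := Finset.mem_range.mp hj; omega
        rw [if_neg hjT]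
      · rw [if_pos (by omega : (T - 1) + 1 = T), show (T - 1) + 1 = T from by omega]
    have hsub : ∑ j ∈ Finset.range (T - 1), (if j + 1 = (i : ℕ) then kh * y (j + 1) else 0)
        = kh * y (i : ℕ) := by
      rw [stmt9_sum_indicator (T - 1) (i : ℕ) (fun j => kh * y (j + 1)) (by omega)]
      by_cases h0 : (i : ℕ) = 0
      · rw [if_pos h0, h0]
        simp [hy]
      · rw [if_neg h0, show (i : ℕ) - 1 + 1 = (i : ℕ) from by omega]
    have hbandsum : ∑ j ∈ Finset.range (T - 1), (if (i : ℕ) ≤ j then c * β ^ (j - (i : ℕ) + 1) * y (j + 1) else 0)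
        = lam * y ((i : ℕ) + 1) - kh * y (i : ℕ) + β ^ (T - (i : ℕ)) * ((kh - c) * y T) := by
      rw [stmt9_sum_band (T - 1) (i : ℕ) _ (by omega)]
      have : ∑ j ∈ Finset.Ico (i : ℕ) (T - 1), c * β ^ (j - (i : ℕ) + 1) * y (j + 1)
          = c * ∑ j ∈ Finset.Ico (i : ℕ) (T - 1), β ^ (j - (i : ℕ) + 1) * y (j + 1) := by
        rw [Finset.mul_sum]
        exact Finset.sum_congr rfl fun j _ => by ring
      rw [this, hband (T - 1 - (i : ℕ)) (i : ℕ) hiT rfl]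
    have hyT0 : 0 < y T := hypos T hT le_rfl
    have hfin : (L1 * K1 / rho) * β ^ (T - (i : ℕ)) * y T
          + β ^ (T - (i : ℕ)) * ((kh - c) * y T) ≥ 0 := by
      have h1 : (0:ℝ) < L1 * K1 / rho := by positivity
      have h2 : kh - c = kb := by rw [hc]; ring
      rw [h2]
      positivity
    rw [hsum, hsplitT, Finset.sum_add_distrib, hsub, hbandsum]
    linarith [hfin]
  have hx : ∀ i : Fin T, 0 < y ((i : ℕ) + 1) := fun i => hypos _ (by omega) (by have := i.isLt; omega)
  have hmain := le_specRad_of_forall (by omega) (stmt9_AT_nonneg hL1 hK1 hrho hβ0 hβ1 hβK T)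
    hx hlam0.le hrow
  refine ⟨hmain, le_trans ?_ hmain⟩
  have hexp2 : lam = kh * β * co ^ 2 + 2 * (a * co * d) + (kh * co ^ 2 - kb) * β := by
    rw [hlam]; linear_combination co ^ 2 * ha2 + hd2
  have h7 : (kh + kb) * β ≤ (2 * kh * co ^ 2) * β := mul_le_mul_of_nonneg_right h2khco hβ0.le
  have h8 : 0 ≤ a * co * d := by positivity
  linarith [hexp2, h7, h8]
end

/-- Asymptotic two-sided bound on `√(ρ(A_T))` and the bound `r ≤ √(ρ(A_T) K̂ β)`
for all sufficiently large horizons (Theorem 3.10). -/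
theorem stmt9 (L1 K1 rho β : ℝ)
    (hL1 : 0 < L1) (hK1 : 0 < K1) (hrho : 0 < rho)
    (hβ0 : 0 < β) (hβ1 : β < 1) (hβK : β * K1 < 2) :
    ∃ T0 : ℕ, ∀ T : ℕ, T0 ≤ T →
      (Real.sqrt (Khat L1 K1 rho β * β) * Real.cos (Real.pi / ((T : ℝ) + 1))
          + Real.sqrt ((Khat L1 K1 rho β * (Real.cos (Real.pi / ((T : ℝ) + 1))) ^ 2
              - Kbar L1 K1 rho β) * β)
        ≤ Real.sqrt (specRad (AT L1 K1 rho β T))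
      ∧ Real.sqrt (specRad (AT L1 K1 rho β T))
        ≤ Real.sqrt (Khat L1 K1 rho β * β)
          + Real.sqrt ((Khat L1 K1 rho β - Kbar L1 K1 rho β) * β))
      ∧ rconst L1 K1 rho β
        ≤ Real.sqrt (specRad (AT L1 K1 rho β T) * Khat L1 K1 rho β * β) := by
  obtain ⟨hLb, hkb0, hcL, hc0, hL1L⟩ := stmt9_facts hL1 hK1 hrho hβ0 hβ1 hβK
  have hkh0 : 0 < Khat L1 K1 rho β := by linarith
  -- tendsto of cos^2
  have h1 : Filter.Tendsto (fun T : ℕ => Real.pi / ((T : ℝ) + 1)) Filter.atTop (nhds 0) := by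
    have h2 := tendsto_one_div_add_atTop_nhds_zero_nat (𝕜 := ℝ)
    have h3 := h2.const_mul Real.pi
    simpa [div_eq_mul_inv] using h3
  have h4 : Filter.Tendsto (fun T : ℕ => Real.cos (Real.pi / ((T : ℝ) + 1)))
      Filter.atTop (nhds 1) := by
    have := (Real.continuous_cos.tendsto 0).comp h1
    simpa [Function.comp_def] using this
  have htend : Filter.Tendsto (fun T : ℕ => Real.cos (Real.pi / ((T : ℝ) + 1)) ^ 2)
      Filter.atTop (nhds 1) := by
    have h5 := h4.pow 2
    simpa using h5
  have hlt : 1 - (Khat L1 K1 rho β - Kbar L1 K1 rho β) / (2 * Khat L1 K1 rho β) < 1 := by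
    have h6 : 0 < (Khat L1 K1 rho β - Kbar L1 K1 rho β) / (2 * Khat L1 K1 rho β) :=
      div_pos hc0 (by linarith)
    linarith
  have hev : ∀ᶠ T : ℕ in Filter.atTop,
      1 - (Khat L1 K1 rho β - Kbar L1 K1 rho β) / (2 * Khat L1 K1 rho β)
        ≤ Real.cos (Real.pi / ((T : ℝ) + 1)) ^ 2 :=
    htend.eventually (eventually_ge_nhds hlt)
  obtain ⟨T0, hT0⟩ := Filter.eventually_atTop.mp hev
  refine ⟨max T0 1, fun T hTT => ?_⟩
  have hT1 : 1 ≤ T := le_trans (le_max_right _ _) hTT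
  have hcosT := hT0 T (le_trans (le_max_left _ _) hTT)
  obtain ⟨hlow, hkhb⟩ := stmt9_lower hL1 hK1 hrho hβ0 hβ1 hβK T hT1 hcosT
  have hup := stmt9_upper hL1 hK1 hrho hβ0 hβ1 hβK T
  have hspec0 : 0 ≤ specRad (AT L1 K1 rho β T) :=
    le_trans (by positivity) hkhb
  refine ⟨⟨?_, ?_⟩, ?_⟩
  · -- lower
    have hconn : 0 ≤ Real.cos (Real.pi / ((T : ℝ) + 1)) := by
      apply Real.cos_nonneg_of_mem_Icc
      constructor
      · have := Real.pi_pos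
        have h7 : 0 < Real.pi / ((T : ℝ) + 1) := by positivity
        linarith
      · apply div_le_div_of_nonneg_left Real.pi_pos.le (by norm_num)
        have : (1 : ℝ) ≤ (T : ℝ) := by exact_mod_cast hT1
        linarith
    have hX0 : 0 ≤ Real.sqrt (Khat L1 K1 rho β * β) * Real.cos (Real.pi / ((T : ℝ) + 1))
        + Real.sqrt ((Khat L1 K1 rho β * (Real.cos (Real.pi / ((T : ℝ) + 1))) ^ 2
            - Kbar L1 K1 rho β) * β) :=
      add_nonneg (mul_nonneg (Real.sqrt_nonneg _) hconn) (Real.sqrt_nonneg _)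
    rw [Real.le_sqrt hX0]
    exact hlow
    exact hspec0
  · -- upper
    have h8 := Real.sqrt_le_sqrt hup
    rwa [Real.sqrt_sq (by positivity : (0:ℝ) ≤ Real.sqrt (Khat L1 K1 rho β * β)
      + Real.sqrt ((Khat L1 K1 rho β - Kbar L1 K1 rho β) * β))] at h8
  · -- r part
    have hr1 : rconst L1 K1 rho β ≤ Khat L1 K1 rho β * β := by
      rw [rconst]
      have h9 : (K1 / rho) * L1 ≤ Khat L1 K1 rho β - Kbar L1 K1 rho β := by
        rw [hcL]
        rw [div_mul_eq_mul_div, mul_comm K1 L1]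
        gcongr
      have h10 : (K1 / rho) * L1 * β ≤ (Khat L1 K1 rho β - Kbar L1 K1 rho β) * β :=
        mul_le_mul_of_nonneg_right h9 hβ0.le
      nlinarith [h10]
    have hr2 : Khat L1 K1 rho β * β ≤ Real.sqrt (specRad (AT L1 K1 rho β T) * Khat L1 K1 rho β * β) := by
      have h11 : (Khat L1 K1 rho β * β) ^ 2 ≤ specRad (AT L1 K1 rho β T) * Khat L1 K1 rho β * β := by
        have := mul_le_mul_of_nonneg_right hkhb (by positivity : (0:ℝ) ≤ Khat L1 K1 rho β * β)
        calc (Khat L1 K1 rho β * β) ^ 2 = (Khat L1 K1 rho β * β) * (Khat L1 K1 rho β * β) := sq _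
          _ ≤ specRad (AT L1 K1 rho β T) * (Khat L1 K1 rho β * β) := this
          _ = specRad (AT L1 K1 rho β T) * Khat L1 K1 rho β * β := by ring
      calc Khat L1 K1 rho β * β = Real.sqrt ((Khat L1 K1 rho β * β) ^ 2) :=
            (Real.sqrt_sq (by positivity)).symm
        _ ≤ _ := Real.sqrt_le_sqrt h11
    exact le_trans hr1 hr2
end
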